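/- arXiv:1011.6302 — 5 statements merged into one kernel-verified Lean document; each statement's English description precedes it below -/
import Mathlib

section
/- Let I be a real interval with [0,1] ⊆ I ⊆ ℝ₊ and let f : Iⁿ → ℝ be a nonconstant quasi-Lovász extension, f = L ∘ φ. Then the following are equivalent: (i) f_0 is weakly homogeneous; (ii) there exists A ⊆ [n] such that f_0(1_A) ≠ 0; (iii) φ(1) ≠ 0. In this case, f_0(x·1_A) = (φ(x)/φ(1))·f_0(1_A) for every x ∈ I and every A ⊆ [n]. -/
open Finset

/-- The indicator tuple `1_A` of a subset `A ⊆ [n]`. -/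
def ind {n : ℕ} (A : Finset (Fin n)) : Fin n → ℝ := fun i => if i ∈ A then 1 else 0

/-- The Möbius transform of a pseudo-Boolean function (viewed as a set function). -/
def mobius {n : ℕ} (ψ : Finset (Fin n) → ℝ) (A : Finset (Fin n)) : ℝ :=
  ∑ B ∈ A.powerset, (-1 : ℝ) ^ (A.card - B.card) * ψ B

/-- `min_{i ∈ A} x i` (with value `0` for `A = ∅`). -/
def minOnFin {n : ℕ} (A : Finset (Fin n)) (x : Fin n → ℝ) : ℝ :=
  if h : A.Nonempty then A.inf' h x else 0

/-- The Lovász extension of a pseudo-Boolean function `ψ` (viewed as a set function):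
`L_ψ(x) = a_ψ(∅) + Σ_{∅ ≠ A ⊆ [n]} a_ψ(A) · min_{i ∈ A} x_i`. -/
def Lov {n : ℕ} (ψ : Finset (Fin n) → ℝ) (x : Fin n → ℝ) : ℝ :=
  mobius ψ ∅ + ∑ A : Finset (Fin n), mobius ψ A * minOnFin A x

/-- `x ∈ ℝⁿ_σ`, i.e. `x_{σ(1)} ≤ ⋯ ≤ x_{σ(n)}`. -/
def inRσ {n : ℕ} (σ : Equiv.Perm (Fin n)) (x : Fin n → ℝ) : Prop :=
  ∀ i j : Fin n, i ≤ j → x (σ i) ≤ x (σ j)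

/-- `A_σ^↑(k) = {σ(j) : j ≥ k}` (0-indexed; `Aup σ n = ∅`). -/
def Aup {n : ℕ} (σ : Equiv.Perm (Fin n)) (k : ℕ) : Finset (Fin n) :=
  (Finset.univ.filter fun j : Fin n => k ≤ (j : ℕ)).image σ

/-- `A_σ^↓(k) = {σ(j) : j < k}` (0-indexed; `Adown σ 0 = ∅`). -/
def Adown {n : ℕ} (σ : Equiv.Perm (Fin n)) (k : ℕ) : Finset (Fin n) :=
  (Finset.univ.filter fun j : Fin n => (j : ℕ) < k).image σ

/-- Weak homogeneity of `h : Iⁿ → ℝ` for `I ⊆ ℝ₊`: there exists a nondecreasing `χ : I → ℝ`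
with `χ(0) = 0` such that `h(x·1_A) = χ(x)·h(1_A)` for every `x ∈ I`, `A ⊆ [n]`. -/
def WeaklyHomPos {n : ℕ} (I : Set ℝ) (h : (Fin n → ℝ) → ℝ) : Prop :=
  ∃ χ : ℝ → ℝ, MonotoneOn χ I ∧ χ 0 = 0 ∧
    ∀ x ∈ I, ∀ A : Finset (Fin n), h (fun i => x * ind A i) = χ x * h (ind A)

def Smob {n : ℕ} (ψ : Finset (Fin n) → ℝ) (A : Finset (Fin n)) : ℝ :=
  ∑ B ∈ A.powerset.filter (fun B => B.Nonempty), mobius ψ B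

lemma minOn_scaled_ind {n : ℕ} (A B : Finset (Fin n)) (c : ℝ) (hc : 0 ≤ c) :
    minOnFin B (fun i => c * ind A i) = if B.Nonempty ∧ B ⊆ A then c else 0 := by
  unfold minOnFin
  by_cases h : B.Nonempty
  · rw [dif_pos h]
    by_cases hBA : B ⊆ A
    · rw [if_pos ⟨h, hBA⟩]
      rw [Finset.inf'_congr h (g := fun _ => c) rfl (fun i hi => by simp [ind, hBA hi])]
      exact Finset.inf'_const h c
    · rw [if_neg (fun hh => hBA hh.2)]
      obtain ⟨i, hiB, hiA⟩ := Finset.not_subset.mp hBA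
      apply le_antisymm
      · calc B.inf' h (fun i => c * ind A i) ≤ c * ind A i := Finset.inf'_le _ hiB
          _ = 0 := by simp [ind, hiA]
      · apply Finset.le_inf'
        intro j hj
        unfold ind
        by_cases hjA : j ∈ A <;> simp [hjA, hc]
  · rw [dif_neg h, if_neg (fun hh => h hh.1)]

lemma Lov_scaled {n : ℕ} (ψ : Finset (Fin n) → ℝ) (A : Finset (Fin n)) (c : ℝ) (hc : 0 ≤ c) :
    Lov ψ (fun i => c * ind A i) = mobius ψ ∅ + c * Smob ψ A := by
  unfold Lov
  congr 1
  rw [show (∑ B : Finset (Fin n), mobius ψ B * minOnFin B (fun i => c * ind A i))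
      = ∑ B : Finset (Fin n), (if B.Nonempty ∧ B ⊆ A then mobius ψ B * c else 0) from
    Finset.sum_congr rfl (fun B _ => by rw [minOn_scaled_ind A B c hc, mul_ite, mul_zero])]
  rw [← Finset.sum_filter]
  rw [show Finset.univ.filter (fun B : Finset (Fin n) => B.Nonempty ∧ B ⊆ A)
      = A.powerset.filter (fun B => B.Nonempty) from by
    ext B; simp [Finset.mem_powerset, and_comm]]
  rw [Smob, Finset.mul_sum]
  exact Finset.sum_congr rfl (fun B _ => mul_comm _ _)

lemma Lov_zero {n : ℕ} (ψ : Finset (Fin n) → ℝ) :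
    Lov ψ (fun _ => 0) = mobius ψ ∅ := by
  have : (fun _ : Fin n => (0:ℝ)) = (fun i => (0:ℝ) * ind (∅ : Finset (Fin n)) i) := by
    funext i; simp
  rw [this, Lov_scaled ψ ∅ 0 le_rfl, zero_mul, add_zero]

lemma mobius_eq_zero {n : ℕ} (ψ : Finset (Fin n) → ℝ) (hS : ∀ A, Smob ψ A = 0) :
    ∀ B : Finset (Fin n), B.Nonempty → mobius ψ B = 0 := by
  intro B
  induction B using Finset.strongInduction with
  | _ B ih =>
    intro hB
    have h := hS B
    unfold Smob at h
    have hBmem : B ∈ B.powerset.filter (fun C => C.Nonempty) := by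
      simp [Finset.mem_powerset, hB]
    rw [← Finset.sum_erase_add _ _ hBmem] at h
    have hz : ∑ C ∈ (B.powerset.filter (fun C => C.Nonempty)).erase B, mobius ψ C = 0 := by
      apply Finset.sum_eq_zero
      intro C hC
      have hC' := Finset.mem_of_mem_erase hC
      simp only [Finset.mem_filter, Finset.mem_powerset] at hC'
      exact ih C (Finset.ssubset_iff_subset_ne.mpr ⟨hC'.1, Finset.ne_of_mem_erase hC⟩) hC'.2
    rw [hz, zero_add] at h
    exact h

lemma Lov_const {n : ℕ} (ψ : Finset (Fin n) → ℝ) (hS : ∀ A, Smob ψ A = 0)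
    (x : Fin n → ℝ) : Lov ψ x = mobius ψ ∅ := by
  unfold Lov
  rw [Finset.sum_eq_zero, add_zero]
  intro B _
  by_cases h : B.Nonempty
  · rw [mobius_eq_zero ψ hS B h, zero_mul]
  · rw [minOnFin, dif_neg h, mul_zero]


/-- For a nonconstant quasi-Lovász extension `f = L ∘ φ` on `Iⁿ`,
`[0,1] ⊆ I ⊆ ℝ₊`: (i) `f_0` weakly homogeneous ↔ (ii) `f_0(1_A) ≠ 0` for some `A`
↔ (iii) `φ(1) ≠ 0`; and in this case `f_0(x·1_A) = (φ(x)/φ(1))·f_0(1_A)`. -/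
theorem stmt4 {n : ℕ} (I : Set ℝ) (hI : I.OrdConnected)
    (hI1 : Set.Icc (0 : ℝ) 1 ⊆ I) (hIpos : I ⊆ Set.Ici (0 : ℝ))
    (f L : (Fin n → ℝ) → ℝ) (φ : ℝ → ℝ)
    (hL : ∃ ψ : Finset (Fin n) → ℝ, L = Lov ψ)
    (hφ : MonotoneOn φ I) (hφ0 : φ 0 = 0)
    (hf : ∀ x : Fin n → ℝ, (∀ i, x i ∈ I) → f x = L (fun i => φ (x i)))
    (hnc : ∃ x y : Fin n → ℝ, (∀ i, x i ∈ I) ∧ (∀ i, y i ∈ I) ∧ f x ≠ f y) :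
    (WeaklyHomPos I (fun y => f y - f (fun _ => 0)) ↔
       ∃ A : Finset (Fin n), f (ind A) - f (fun _ => 0) ≠ 0) ∧
    ((∃ A : Finset (Fin n), f (ind A) - f (fun _ => 0) ≠ 0) ↔ φ 1 ≠ 0) ∧
    (φ 1 ≠ 0 → ∀ x ∈ I, ∀ A : Finset (Fin n),
      f (fun i => x * ind A i) - f (fun _ => 0) =
        (φ x / φ 1) * (f (ind A) - f (fun _ => 0))) := by
  obtain ⟨ψ, rfl⟩ := hL
  have h0I : (0:ℝ) ∈ I := hI1 ⟨le_refl 0, zero_le_one⟩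
  have h1I : (1:ℝ) ∈ I := hI1 ⟨zero_le_one, le_refl 1⟩
  have hφnn : ∀ x ∈ I, 0 ≤ φ x := fun x hx => hφ0 ▸ hφ h0I hx (hIpos hx)
  have hmemI : ∀ x ∈ I, ∀ A : Finset (Fin n), ∀ i, x * ind A i ∈ I := by
    intro x hx A i
    by_cases hi : i ∈ A <;> simp [ind, hi, hx, h0I]
  have hf0 : f (fun _ => 0) = mobius ψ ∅ := by
    rw [hf _ (fun _ => h0I)]
    have : (fun i : Fin n => φ 0) = (fun _ : Fin n => (0:ℝ)) := by funext i; rw [hφ0]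
    rw [this, Lov_zero]
  have hfs : ∀ x ∈ I, ∀ A : Finset (Fin n),
      f (fun i => x * ind A i) = mobius ψ ∅ + φ x * Smob ψ A := by
    intro x hx A
    rw [hf _ (hmemI x hx A)]
    have : (fun i => φ (x * ind A i)) = (fun i => φ x * ind A i) := by
      funext i
      by_cases hi : i ∈ A <;> simp [ind, hi, hφ0]
    rw [this, Lov_scaled ψ A (φ x) (hφnn x hx)]
  have hfind : ∀ A : Finset (Fin n), f (ind A) = mobius ψ ∅ + φ 1 * Smob ψ A := by
    intro A
    have : ind A = (fun i => (1:ℝ) * ind A i) := by funext i; rw [one_mul]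
    rw [this, hfs 1 h1I A]
  have hex : ∃ A : Finset (Fin n), Smob ψ A ≠ 0 := by
    by_contra h
    push_neg at h
    obtain ⟨x, y, hx, hy, hxy⟩ := hnc
    apply hxy
    rw [hf x hx, hf y hy, Lov_const ψ h, Lov_const ψ h]
  have key2 : (∃ A : Finset (Fin n), f (ind A) - f (fun _ => 0) ≠ 0) ↔ φ 1 ≠ 0 := by
    constructor
    · rintro ⟨A, hA⟩ h1
      apply hA
      rw [hfind A, hf0, h1]; ring
    · intro h1
      obtain ⟨A, hA⟩ := hex
      exact ⟨A, by rw [hfind A, hf0]; simpa using mul_ne_zero h1 hA⟩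
  refine ⟨?_, key2, ?_⟩
  · constructor
    · rintro ⟨χ, hχmon, hχ0, hχ⟩
      rw [key2]
      by_contra h1
      obtain ⟨A, hA⟩ := hex
      have hφall : ∀ x ∈ I, φ x = 0 := by
        intro x hx
        have h := hχ x hx A
        simp only at h
        rw [hfs x hx A, hf0, hfind A, h1, zero_mul] at h
        have : φ x * Smob ψ A = 0 := by linarith [h]
        exact (mul_eq_zero.mp this).resolve_right hA
      obtain ⟨x, y, hx, hy, hxy⟩ := hnc
      apply hxy
      rw [hf x hx, hf y hy]
      have ex : (fun i => φ (x i)) = (fun _ : Fin n => (0:ℝ)) := by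
        funext i; exact hφall _ (hx i)
      have ey : (fun i => φ (y i)) = (fun _ : Fin n => (0:ℝ)) := by
        funext i; exact hφall _ (hy i)
      rw [ex, ey]
    · intro hii
      have h1 := key2.mp hii
      have h1pos : 0 < φ 1 := lt_of_le_of_ne (hφnn 1 h1I) (Ne.symm h1)
      refine ⟨fun x => φ x / φ 1, ?_, by simp only []; rw [hφ0, zero_div], ?_⟩
      · intro a ha b hb hab
        exact (div_le_div_iff_of_pos_right h1pos).mpr (hφ ha hb hab)
      · intro x hx A
        simp only
        rw [hfs x hx A, hf0, hfind A]
        field_simp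
        ring
  · intro h1 x hx A
    rw [hfs x hx A, hf0, hfind A]
    field_simp
    ring
end

section
/- Let I be a real interval centered at 0 with [−1,1] ⊆ I and let f : Iⁿ → ℝ be a symmetric quasi-Lovász extension, f = Ľ ∘ φ, such that the restriction of f to (I ∩ ℝ₊)ⁿ or to (I ∩ ℝ₋)ⁿ is nonconstant. Then the following are equivalent: (i) f_0 is oddly homogeneous; (ii) there exists A ⊆ [n] such that f_0(1_A) ≠ 0; (iii) φ(1) ≠ 0. In this case, f_0(x·1_A) = (φ(x)/φ(1))·f_0(1_A) for every x ∈ I and every A ⊆ [n]. -/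
open Finset

/-- The symmetric Lovász extension of `ψ`: `Lcheck_ψ(x) = ψ(0) + L_ψ(x⁺) − L_ψ(x⁻)`. -/
def SLov {n : ℕ} (ψ : Finset (Fin n) → ℝ) (x : Fin n → ℝ) : ℝ :=
  ψ ∅ + Lov ψ (fun i => max (x i) 0) - Lov ψ (fun i => max (-(x i)) 0)

/-- Odd homogeneity of `h : Iⁿ → ℝ` for `I` centered at `0`: there exists a nondecreasing odd
`χ : I → ℝ` such that `h(x·1_A) = χ(x)·h(1_A)` for every `x ∈ I`, `A ⊆ [n]`. -/
def OddlyHom {n : ℕ} (I : Set ℝ) (h : (Fin n → ℝ) → ℝ) : Prop :=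
  ∃ χ : ℝ → ℝ, MonotoneOn χ I ∧ (∀ x ∈ I, χ (-x) = -(χ x)) ∧
    ∀ x ∈ I, ∀ A : Finset (Fin n), h (fun i => x * ind A i) = χ x * h (ind A)

namespace Stmt8Aux
variable {n : ℕ} (ψ : Finset (Fin n) → ℝ)

lemma mobius_empty : mobius ψ ∅ = ψ ∅ := by simp [mobius]

def S (A : Finset (Fin n)) : ℝ := ∑ B ∈ A.powerset.erase ∅, mobius ψ B

lemma minOn_ind (c : ℝ) (hc : 0 ≤ c) (A B : Finset (Fin n)) :
    minOnFin B (fun i => c * ind A i) = if B.Nonempty ∧ B ⊆ A then c else 0 := by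
  unfold minOnFin
  by_cases hB : B.Nonempty
  · rw [dif_pos hB]
    by_cases hBA : B ⊆ A
    · rw [if_pos ⟨hB, hBA⟩]
      apply le_antisymm
      · obtain ⟨i, hi⟩ := hB
        refine (Finset.inf'_le _ hi).trans ?_
        simp [ind, hBA hi]
      · apply Finset.le_inf'
        intro i hi; simp [ind, hBA hi]
    · rw [if_neg (by tauto)]
      obtain ⟨i, hi, hiA⟩ := Finset.not_subset.mp hBA
      apply le_antisymm
      · refine (Finset.inf'_le _ hi).trans ?_; simp [ind, hiA]
      · apply Finset.le_inf'; intro j hj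
        simp only [ind]
        split
        · simpa using hc
        · simp
  · rw [dif_neg hB, if_neg (by tauto)]

lemma Lov_ind (c : ℝ) (hc : 0 ≤ c) (A : Finset (Fin n)) :
    Lov ψ (fun i => c * ind A i) = ψ ∅ + c * S ψ A := by
  unfold Lov
  rw [mobius_empty]
  congr 1
  calc ∑ B : Finset (Fin n), mobius ψ B * minOnFin B (fun i => c * ind A i)
      = ∑ B : Finset (Fin n), (if B.Nonempty ∧ B ⊆ A then mobius ψ B * c else 0) := by
        apply Finset.sum_congr rfl; intro B _
        rw [minOn_ind c hc]
        split <;> simp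
    _ = ∑ B ∈ univ.filter (fun B : Finset (Fin n) => B.Nonempty ∧ B ⊆ A), mobius ψ B * c :=
        (Finset.sum_filter _ _).symm
    _ = ∑ B ∈ A.powerset.erase ∅, mobius ψ B * c := by
        apply Finset.sum_congr _ (fun _ _ => rfl)
        ext B
        simp [Finset.mem_erase, Finset.mem_powerset, Finset.nonempty_iff_ne_empty, and_comm]
    _ = c * S ψ A := by rw [S, Finset.mul_sum]; apply Finset.sum_congr rfl; intros; ring

lemma SLov_ind (c : ℝ) (A : Finset (Fin n)) :
    SLov ψ (fun i => c * ind A i) = ψ ∅ + c * S ψ A := by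
  unfold SLov
  have h1 : (fun i => max (c * ind A i) 0) = fun i => max c 0 * ind A i := by
    funext i; simp only [ind]; split <;> simp
  have h2 : (fun i => max (-(c * ind A i)) 0) = fun i => max (-c) 0 * ind A i := by
    funext i; simp only [ind]; split <;> simp
  rw [h1, h2, Lov_ind ψ _ (le_max_right _ _) A, Lov_ind ψ _ (le_max_right _ _) A]
  have hm : max c 0 - max (-c) 0 = c := by
    rcases le_total c 0 with h | h
    · rw [max_eq_right h, max_eq_left (by linarith)]; ring
    · rw [max_eq_left h, max_eq_right (by linarith)]; ring
  linear_combination (S ψ A) * hm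

lemma mobius_eq_zero (hS : ∀ A, S ψ A = 0) :
    ∀ B : Finset (Fin n), B ≠ ∅ → mobius ψ B = 0 := by
  intro B
  induction B using Finset.strongInduction with
  | _ B ih =>
    intro hB
    have hmem : B ∈ B.powerset.erase ∅ := by
      simp [Finset.mem_erase, Finset.mem_powerset, hB]
    have h := hS B
    rw [S, ← Finset.add_sum_erase _ _ hmem] at h
    have hz : ∑ C ∈ (B.powerset.erase ∅).erase B, mobius ψ C = 0 := by
      apply Finset.sum_eq_zero
      intro C hC
      simp only [Finset.mem_erase, Finset.mem_powerset] at hC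
      exact ih C (lt_of_le_of_ne hC.2.2 hC.1) hC.2.1
    rw [hz] at h; linarith

lemma Lov_of_mzero (hm : ∀ B : Finset (Fin n), B ≠ ∅ → mobius ψ B = 0) (z : Fin n → ℝ) :
    Lov ψ z = ψ ∅ := by
  unfold Lov
  rw [mobius_empty]
  have : ∀ B ∈ (univ : Finset (Finset (Fin n))), mobius ψ B * minOnFin B z = 0 := by
    intro B _
    by_cases hB : B = ∅
    · subst hB; simp [minOnFin]
    · simp [hm B hB]
  rw [Finset.sum_eq_zero this]; ring

end Stmt8Aux

/-- For a symmetric quasi-Lovász extension `f = Lcheck ∘ φ` on `Iⁿ`, `I` centered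
at `0` with `[−1,1] ⊆ I`, whose restriction to `(I ∩ ℝ₊)ⁿ` or `(I ∩ ℝ₋)ⁿ` is nonconstant:
(i) `f_0` oddly homogeneous ↔ (ii) `f_0(1_A) ≠ 0` for some `A` ↔ (iii) `φ(1) ≠ 0`;
and in this case `f_0(x·1_A) = (φ(x)/φ(1))·f_0(1_A)`. -/
theorem stmt8 {n : ℕ} (I : Set ℝ) (hI : I.OrdConnected)
    (hsym : ∀ x ∈ I, -x ∈ I) (hI1 : Set.Icc (-1 : ℝ) 1 ⊆ I)
    (f Lcheck : (Fin n → ℝ) → ℝ) (φ : ℝ → ℝ)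
    (hL : ∃ ψ : Finset (Fin n) → ℝ, Lcheck = SLov ψ)
    (hφ : MonotoneOn φ I) (hφodd : ∀ x ∈ I, φ (-x) = -(φ x))
    (hf : ∀ x : Fin n → ℝ, (∀ i, x i ∈ I) → f x = Lcheck (fun i => φ (x i)))
    (hnc : (∃ x y : Fin n → ℝ, (∀ i, x i ∈ I ∩ Set.Ici (0 : ℝ)) ∧
              (∀ i, y i ∈ I ∩ Set.Ici (0 : ℝ)) ∧ f x ≠ f y) ∨
           (∃ x y : Fin n → ℝ, (∀ i, x i ∈ I ∩ Set.Iic (0 : ℝ)) ∧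
              (∀ i, y i ∈ I ∩ Set.Iic (0 : ℝ)) ∧ f x ≠ f y)) :
    (OddlyHom I (fun y => f y - f (fun _ => 0)) ↔
       ∃ A : Finset (Fin n), f (ind A) - f (fun _ => 0) ≠ 0) ∧
    ((∃ A : Finset (Fin n), f (ind A) - f (fun _ => 0) ≠ 0) ↔ φ 1 ≠ 0) ∧
    (φ 1 ≠ 0 → ∀ x ∈ I, ∀ A : Finset (Fin n),
      f (fun i => x * ind A i) - f (fun _ => 0) =
        (φ x / φ 1) * (f (ind A) - f (fun _ => 0))) := by
  obtain ⟨ψ, rfl⟩ := hL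
  have h0I : (0:ℝ) ∈ I := hI1 ⟨by norm_num, by norm_num⟩
  have h1I : (1:ℝ) ∈ I := hI1 ⟨by norm_num, le_refl 1⟩
  have hφ0 : φ 0 = 0 := by have := hφodd 0 h0I; simp at this; linarith
  have hmem : ∀ x ∈ I, ∀ A : Finset (Fin n), ∀ i, x * ind A i ∈ I := by
    intro x hx A i; unfold ind; split <;> simp [hx, h0I]
  have key : ∀ x ∈ I, ∀ A : Finset (Fin n),
      f (fun i => x * ind A i) = ψ ∅ + φ x * Stmt8Aux.S ψ A := by
    intro x hx A
    rw [hf _ (hmem x hx A)]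
    have h : (fun i => φ (x * ind A i)) = fun i => φ x * ind A i := by
      funext i; unfold ind; split <;> simp [hφ0]
    rw [h, Stmt8Aux.SLov_ind]
  have f0 : f (fun _ => 0) = ψ ∅ := by
    have := key 0 h0I ∅
    simpa [hφ0] using this
  have key1 : ∀ A : Finset (Fin n), f (ind A) = ψ ∅ + φ 1 * Stmt8Aux.S ψ A := by
    intro A
    have := key 1 h1I A
    have h : (fun i => (1:ℝ) * ind A i) = ind A := by funext i; ring
    rwa [h] at this
  have hfconst : (∀ x : Fin n → ℝ, (∀ i, x i ∈ I) → f x = ψ ∅) → False := by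
    intro hc
    rcases hnc with ⟨x, y, hx, hy, hxy⟩ | ⟨x, y, hx, hy, hxy⟩ <;>
      exact hxy (by rw [hc x (fun i => (hx i).1), hc y (fun i => (hy i).1)])
  have hSne : ∃ A, Stmt8Aux.S ψ A ≠ 0 := by
    by_contra h
    push_neg at h
    apply hfconst
    intro x hx
    rw [hf x hx]
    unfold SLov
    rw [Stmt8Aux.Lov_of_mzero ψ (Stmt8Aux.mobius_eq_zero ψ h),
        Stmt8Aux.Lov_of_mzero ψ (Stmt8Aux.mobius_eq_zero ψ h)]
    ring
  have hφconst : (∀ x ∈ I, φ x = 0) → False := by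
    intro hz
    apply hfconst
    intro x hx
    rw [hf x hx]
    have h : (fun i => φ (x i)) = (fun i => (0:ℝ) * ind (∅ : Finset (Fin n)) i) := by
      funext i; simp [hz (x i) (hx i)]
    rw [h, Stmt8Aux.SLov_ind]; ring
  have goal2 : (∃ A : Finset (Fin n), f (ind A) - f (fun _ => 0) ≠ 0) ↔ φ 1 ≠ 0 := by
    constructor
    · rintro ⟨A, hA⟩ h1
      apply hA; rw [key1 A, f0, h1]; ring
    · intro h1
      obtain ⟨A, hA⟩ := hSne
      refine ⟨A, ?_⟩
      rw [key1 A, f0]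
      have := mul_ne_zero h1 hA
      intro hcon; apply this; linarith
  have hφ1nn : 0 ≤ φ 1 := by
    have := hφ h0I h1I (by norm_num : (0:ℝ) ≤ 1)
    linarith [hφ0]
  refine ⟨?_, goal2, ?_⟩
  · constructor
    · rintro ⟨χ, hχmono, hχodd, hχhom⟩
      by_contra h
      push_neg at h
      apply hφconst
      intro x hx
      obtain ⟨A, hA⟩ := hSne
      have h2 := hχhom x hx A
      simp only at h2
      rw [key x hx A, key1 A, f0] at h2
      have h3 := h A
      rw [key1 A, f0] at h3
      have h4 : φ 1 * Stmt8Aux.S ψ A = 0 := by linarith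
      have h5 : φ x * Stmt8Aux.S ψ A = 0 := by
        have : ψ ∅ + φ x * Stmt8Aux.S ψ A - ψ ∅ = χ x * (ψ ∅ + φ 1 * Stmt8Aux.S ψ A - ψ ∅) := h2
        rw [h4] at this; simpa using this
      exact (mul_eq_zero.mp h5).resolve_right hA
    · rintro ⟨A, hA⟩
      have h1 : φ 1 ≠ 0 := goal2.mp ⟨A, hA⟩
      have h1pos : 0 < φ 1 := lt_of_le_of_ne hφ1nn (Ne.symm h1)
      refine ⟨fun x => φ x / φ 1, ?_, ?_, ?_⟩
      · intro a ha b hb hab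
        exact div_le_div_of_nonneg_right (hφ ha hb hab) h1pos.le
      · intro x hx
        show φ (-x) / φ 1 = -(φ x / φ 1)
        rw [hφodd x hx]; ring
      · intro x hx B
        simp only
        rw [key x hx B, key1 B, f0]
        field_simp
        ring
  · intro h1 x hx A
    rw [key x hx A, key1 A, f0]
    field_simp
    ring
end

section
/- Let I ⊆ ℝ₋ = (−∞,0] be a real interval containing 0 and let f : Iⁿ → ℝ. Then the following are equivalent: (i) f is comonotonically modular; (ii) f is invariant under horizontal max-differences; (iii) there exists a function g : Iⁿ → ℝ such that for every permutation σ of [n] and every x ∈ Iⁿ ∩ ℝⁿ_σ, f(x) = g(0,…,0) + Σ_{i=1}^{n} (g(x_{σ(i)}·1_{A_σ^↓(i)}) − g(x_{σ(i)}·1_{A_σ^↓(i−1)})). Moreover, in (iii) one can choose g = f. -/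
open Finset

/-- `f` is comonotonically modular on `Iⁿ`:
`f(x) + f(x′) = f(x ∧ x′) + f(x ∨ x′)` for all comonotonic `x, x′ ∈ Iⁿ`. -/
def ComonModular {n : ℕ} (I : Set ℝ) (f : (Fin n → ℝ) → ℝ) : Prop :=
  ∀ σ : Equiv.Perm (Fin n), ∀ x y : Fin n → ℝ,
    (∀ i, x i ∈ I) → (∀ i, y i ∈ I) → inRσ σ x → inRσ σ y →
    f x + f y = f (fun i => min (x i) (y i)) + f (fun i => max (x i) (y i))

/-- `f` is invariant under horizontal max-differences on `Iⁿ` (`I ⊆ ℝ₋`):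
`f(x) − f(x ∨ c) = f([x]^c) − f([x]^c ∨ c)` for every `x ∈ Iⁿ` and `c ∈ I`. -/
def InvHMax {n : ℕ} (I : Set ℝ) (f : (Fin n → ℝ) → ℝ) : Prop :=
  ∀ x : Fin n → ℝ, (∀ i, x i ∈ I) → ∀ c ∈ I,
    f x - f (fun i => max (x i) c) =
      f (fun i => if c ≤ x i then 0 else x i) -
      f (fun i => max (if c ≤ x i then 0 else x i) c)

namespace Stmt10Aux

variable {n : ℕ}

lemma mem_Adown (σ : Equiv.Perm (Fin n)) (k : ℕ) (j : Fin n) :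
    j ∈ Adown σ k ↔ ((σ.symm j : Fin n) : ℕ) < k := by
  simp only [Adown, Finset.mem_image, Finset.mem_filter, Finset.mem_univ, true_and]
  constructor
  · rintro ⟨a, ha, rfl⟩; simpa using ha
  · intro h; exact ⟨σ.symm j, h, σ.apply_symm_apply j⟩

/-- The "step" vector: value `v` on `σ(0..k-1)`, `0` elsewhere. -/
def Sv (σ : Equiv.Perm (Fin n)) (v : ℝ) (k : ℕ) : Fin n → ℝ :=
  fun j => v * ind (Adown σ k) j

lemma Sv_apply (σ : Equiv.Perm (Fin n)) (v : ℝ) (k : ℕ) (j : Fin n) :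
    Sv σ v k j = if ((σ.symm j : Fin n) : ℕ) < k then v else 0 := by
  simp only [Sv, ind, mem_Adown]
  split_ifs <;> ring

lemma Sv_apply' (σ : Equiv.Perm (Fin n)) (v : ℝ) (k : ℕ) (i : Fin n) :
    Sv σ v k (σ i) = if (i : ℕ) < k then v else 0 := by
  rw [Sv_apply, Equiv.symm_apply_apply]

lemma Sv_zero (σ : Equiv.Perm (Fin n)) (k : ℕ) : Sv σ 0 k = fun _ => (0 : ℝ) := by
  funext j; rw [Sv_apply]; split_ifs <;> rfl

lemma inRσ_Sv (σ : Equiv.Perm (Fin n)) {v : ℝ} (hv : v ≤ 0) (k : ℕ) :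
    inRσ σ (Sv σ v k) := by
  intro i j hij
  rw [Sv_apply', Sv_apply']
  have hij' : (i : ℕ) ≤ (j : ℕ) := hij
  split_ifs with h1 h2 h2
  · exact le_rfl
  · exact hv
  · omega
  · exact le_rfl

lemma mem_Sv {I : Set ℝ} (h0 : (0:ℝ) ∈ I) (σ : Equiv.Perm (Fin n)) {v : ℝ} (hv : v ∈ I)
    (k : ℕ) : ∀ j, Sv σ v k j ∈ I := by
  intro j; rw [Sv_apply]; split_ifs
  · exact hv
  · exact h0

/-- Truncation: `x` on `σ(0..k-1)`, `0` elsewhere. -/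
def Tr (σ : Equiv.Perm (Fin n)) (x : Fin n → ℝ) (k : ℕ) : Fin n → ℝ :=
  fun j => if ((σ.symm j : Fin n) : ℕ) < k then x j else 0

lemma Tr_apply' (σ : Equiv.Perm (Fin n)) (x : Fin n → ℝ) (k : ℕ) (i : Fin n) :
    Tr σ x k (σ i) = if (i : ℕ) < k then x (σ i) else 0 := by
  rw [Tr, Equiv.symm_apply_apply]

lemma Tr_zero (σ : Equiv.Perm (Fin n)) (x : Fin n → ℝ) : Tr σ x 0 = fun _ => (0:ℝ) := by
  funext j; rw [Tr]; simp

lemma Tr_top (σ : Equiv.Perm (Fin n)) (x : Fin n → ℝ) {k : ℕ} (hk : n ≤ k) :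
    Tr σ x k = x := by
  funext j; rw [Tr, if_pos (lt_of_lt_of_le (σ.symm j).isLt hk)]

lemma inRσ_Tr (σ : Equiv.Perm (Fin n)) {x : Fin n → ℝ} (hs : inRσ σ x)
    (hneg : ∀ i, x i ≤ 0) (k : ℕ) : inRσ σ (Tr σ x k) := by
  intro i j hij
  rw [Tr_apply', Tr_apply']
  have hij' : (i : ℕ) ≤ (j : ℕ) := hij
  split_ifs with h1 h2 h2
  · exact hs i j hij
  · exact hneg _
  · omega
  · exact le_rfl

lemma mem_Tr {I : Set ℝ} (h0 : (0:ℝ) ∈ I) (σ : Equiv.Perm (Fin n)) {x : Fin n → ℝ}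
    (hx : ∀ i, x i ∈ I) (k : ℕ) : ∀ j, Tr σ x k j ∈ I := by
  intro j; rw [Tr]; split_ifs
  · exact hx j
  · exact h0

lemma step_min (σ : Equiv.Perm (Fin n)) {x : Fin n → ℝ} (hs : inRσ σ x)
    (hneg : ∀ i, x i ≤ 0) {k : ℕ} (hk : k < n) :
    (fun j => min (Tr σ x k j) (Sv σ (x (σ ⟨k, hk⟩)) (k+1) j)) = Tr σ x (k+1) := by
  funext j
  rw [Tr, Tr, Sv_apply]
  rcases lt_trichotomy ((σ.symm j : Fin n) : ℕ) k with h | h | h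
  · rw [if_pos h, if_pos (by omega), if_pos (by omega)]
    have hle : x j ≤ x (σ ⟨k, hk⟩) := by
      have := hs (σ.symm j) ⟨k, hk⟩ (by exact le_of_lt h)
      rwa [Equiv.apply_symm_apply] at this
    exact min_eq_left hle
  · have hj : j = σ ⟨k, hk⟩ := by
      have : σ.symm j = ⟨k, hk⟩ := Fin.ext h
      rw [← this, Equiv.apply_symm_apply]
    rw [if_neg (by omega), if_pos (by omega), if_pos (by omega), hj]
    exact min_eq_right (hneg _)
  · rw [if_neg (by omega), if_neg (by omega), if_neg (by omega)]
    exact min_self 0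

lemma step_max (σ : Equiv.Perm (Fin n)) {x : Fin n → ℝ} (hs : inRσ σ x)
    (hneg : ∀ i, x i ≤ 0) {k : ℕ} (hk : k < n) :
    (fun j => max (Tr σ x k j) (Sv σ (x (σ ⟨k, hk⟩)) (k+1) j)) = Sv σ (x (σ ⟨k, hk⟩)) k := by
  funext j
  rw [Tr, Sv_apply, Sv_apply]
  rcases lt_trichotomy ((σ.symm j : Fin n) : ℕ) k with h | h | h
  · rw [if_pos h, if_pos (by omega), if_pos h]
    have hle : x j ≤ x (σ ⟨k, hk⟩) := by
      have := hs (σ.symm j) ⟨k, hk⟩ (by exact le_of_lt h)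
      rwa [Equiv.apply_symm_apply] at this
    exact max_eq_right hle
  · rw [if_neg (by omega), if_pos (by omega), if_neg (by omega)]
    exact max_eq_left (hneg _)
  · rw [if_neg (by omega), if_neg (by omega), if_neg (by omega)]
    exact max_self 0

lemma telescope (F : ℕ → ℝ) : ∀ a b : ℕ, a ≤ b →
    ∑ i ∈ Finset.Ico a b, (F (i+1) - F i) = F b - F a := by
  intro a b hab
  induction b, hab using Nat.le_induction with
  | base => simp
  | succ b hab ih =>
    rw [Finset.sum_Ico_succ_top (by omega), ih]; ring

/-- The ℕ-indexed version of `x ∘ σ`. -/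
def Xv (σ : Equiv.Perm (Fin n)) (x : Fin n → ℝ) : ℕ → ℝ :=
  fun i => if h : i < n then x (σ ⟨i, h⟩) else 0

lemma Xv_lt (σ : Equiv.Perm (Fin n)) (x : Fin n → ℝ) {i : ℕ} (h : i < n) :
    Xv σ x i = x (σ ⟨i, h⟩) := dif_pos h

lemma Xv_fin (σ : Equiv.Perm (Fin n)) (x : Fin n → ℝ) (i : Fin n) :
    Xv σ x (i : ℕ) = x (σ i) := by
  rw [Xv_lt σ x i.isLt]

lemma sum_term_eq (g : (Fin n → ℝ) → ℝ) (σ : Equiv.Perm (Fin n)) (x : Fin n → ℝ) :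
    (∑ i : Fin n,
      (g (fun j => x (σ i) * ind (Adown σ ((i : ℕ) + 1)) j) -
       g (fun j => x (σ i) * ind (Adown σ (i : ℕ)) j)))
    = ∑ i ∈ Finset.range n, (g (Sv σ (Xv σ x i) (i+1)) - g (Sv σ (Xv σ x i) i)) := by
  rw [← Fin.sum_univ_eq_sum_range (fun i => g (Sv σ (Xv σ x i) (i+1)) - g (Sv σ (Xv σ x i) i)) n]
  apply Finset.sum_congr rfl
  intro i _
  rw [Xv_fin]
  rfl

lemma repr_of_modular {I : Set ℝ} (h0 : (0:ℝ) ∈ I) (hIneg : I ⊆ Set.Iic 0)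
    {f : (Fin n → ℝ) → ℝ} (hf : ComonModular I f)
    (σ : Equiv.Perm (Fin n)) (x : Fin n → ℝ) (hx : ∀ i, x i ∈ I) (hs : inRσ σ x) :
    f x = f (fun _ => 0) + ∑ i ∈ Finset.range n,
      (f (Sv σ (Xv σ x i) (i+1)) - f (Sv σ (Xv σ x i) i)) := by
  have hneg : ∀ i, x i ≤ 0 := fun i => hIneg (hx i)
  have key : ∀ k, k ≤ n → f (Tr σ x k) = f (fun _ => 0) +
      ∑ i ∈ Finset.range k, (f (Sv σ (Xv σ x i) (i+1)) - f (Sv σ (Xv σ x i) i)) := by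
    intro k
    induction k with
    | zero => intro _; rw [Tr_zero]; simp
    | succ k ih =>
      intro hk1
      have hk : k < n := hk1
      have hv : Xv σ x k = x (σ ⟨k, hk⟩) := Xv_lt σ x hk
      have hmod := hf σ (Tr σ x k) (Sv σ (x (σ ⟨k, hk⟩)) (k+1))
        (mem_Tr h0 σ hx k) (mem_Sv h0 σ (hx _) (k+1))
        (inRσ_Tr σ hs hneg k) (inRσ_Sv σ (hneg _) (k+1))
      rw [step_min σ hs hneg hk, step_max σ hs hneg hk] at hmod
      rw [Finset.sum_range_succ, hv]
      have := ih (le_of_lt hk)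
      linarith
  have := key n le_rfl
  rwa [Tr_top σ x le_rfl] at this

lemma modular_of_repr {I : Set ℝ} {f g : (Fin n → ℝ) → ℝ}
    (hg : ∀ σ : Equiv.Perm (Fin n), ∀ x : Fin n → ℝ, (∀ i, x i ∈ I) → inRσ σ x →
        f x = g (fun _ => 0) + ∑ i : Fin n,
          (g (fun j => x (σ i) * ind (Adown σ ((i : ℕ) + 1)) j) -
           g (fun j => x (σ i) * ind (Adown σ (i : ℕ)) j))) :
    ComonModular I f := by
  intro σ x y hx hy hsx hsy
  have hmmem : ∀ i, min (x i) (y i) ∈ I := by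
    intro i; rcases le_total (x i) (y i) with h | h
    · rw [min_eq_left h]; exact hx i
    · rw [min_eq_right h]; exact hy i
  have hMmem : ∀ i, max (x i) (y i) ∈ I := by
    intro i; rcases le_total (x i) (y i) with h | h
    · rw [max_eq_right h]; exact hy i
    · rw [max_eq_left h]; exact hx i
  have hmsort : inRσ σ (fun i => min (x i) (y i)) :=
    fun i j hij => min_le_min (hsx i j hij) (hsy i j hij)
  have hMsort : inRσ σ (fun i => max (x i) (y i)) :=
    fun i j hij => max_le_max (hsx i j hij) (hsy i j hij)
  have h1 := hg σ x hx hsx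
  have h2 := hg σ y hy hsy
  have h3 : f (fun i => min (x i) (y i)) = g (fun _ => 0) + ∑ i : Fin n,
      (g (fun j => min (x (σ i)) (y (σ i)) * ind (Adown σ ((i : ℕ) + 1)) j) -
       g (fun j => min (x (σ i)) (y (σ i)) * ind (Adown σ (i : ℕ)) j)) :=
    hg σ (fun i => min (x i) (y i)) hmmem hmsort
  have h4 : f (fun i => max (x i) (y i)) = g (fun _ => 0) + ∑ i : Fin n,
      (g (fun j => max (x (σ i)) (y (σ i)) * ind (Adown σ ((i : ℕ) + 1)) j) -
       g (fun j => max (x (σ i)) (y (σ i)) * ind (Adown σ (i : ℕ)) j)) :=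
    hg σ (fun i => max (x i) (y i)) hMmem hMsort
  rw [h1, h2, h3, h4]
  have hsum : (∑ i : Fin n,
      (g (fun j => x (σ i) * ind (Adown σ ((i : ℕ) + 1)) j) -
       g (fun j => x (σ i) * ind (Adown σ (i : ℕ)) j))) +
      (∑ i : Fin n,
      (g (fun j => y (σ i) * ind (Adown σ ((i : ℕ) + 1)) j) -
       g (fun j => y (σ i) * ind (Adown σ (i : ℕ)) j))) =
      (∑ i : Fin n,
      (g (fun j => min (x (σ i)) (y (σ i)) * ind (Adown σ ((i : ℕ) + 1)) j) -
       g (fun j => min (x (σ i)) (y (σ i)) * ind (Adown σ (i : ℕ)) j))) +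
      (∑ i : Fin n,
      (g (fun j => max (x (σ i)) (y (σ i)) * ind (Adown σ ((i : ℕ) + 1)) j) -
       g (fun j => max (x (σ i)) (y (σ i)) * ind (Adown σ (i : ℕ)) j))) := by
    rw [← Finset.sum_add_distrib, ← Finset.sum_add_distrib]
    refine Finset.sum_congr rfl fun i _ => ?_
    rcases le_total (x (σ i)) (y (σ i)) with h | h
    · rw [min_eq_left h, max_eq_right h]
    · rw [min_eq_right h, max_eq_left h]; ring
  linarith

lemma invh_of_modular {I : Set ℝ} (hI : I.OrdConnected) (h0 : (0:ℝ) ∈ I)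
    (hIneg : I ⊆ Set.Iic 0) {f : (Fin n → ℝ) → ℝ} (hf : ComonModular I f) :
    InvHMax I f := by
  intro x hx c hc
  have hc0 : c ≤ 0 := hIneg hc
  have hneg : ∀ i, x i ≤ 0 := fun i => hIneg (hx i)
  set σ := Tuple.sort x with hσ
  have hsx : inRσ σ x := fun i j hij => Tuple.monotone_sort x hij
  have hamem : ∀ i, max (x i) c ∈ I := fun i =>
    hI.out hc h0 ⟨le_max_right _ _, max_le (hneg i) hc0⟩
  have hbmem : ∀ i, (if c ≤ x i then (0:ℝ) else x i) ∈ I := by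
    intro i; split_ifs; exacts [h0, hx i]
  have hasort : inRσ σ (fun i => max (x i) c) :=
    fun i j hij => max_le_max (hsx i j hij) le_rfl
  have hbsort : inRσ σ (fun i => if c ≤ x i then (0:ℝ) else x i) := by
    intro i j hij
    dsimp only
    by_cases h1 : c ≤ x (σ i) <;> by_cases h2 : c ≤ x (σ j)
    · rw [if_pos h1, if_pos h2]
    · exact absurd (le_trans h1 (hsx i j hij)) h2
    · rw [if_neg h1, if_pos h2]; exact hneg _
    · rw [if_neg h1, if_neg h2]; exact hsx i j hij
  have hmin : (fun i => min (max (x i) c) (if c ≤ x i then (0:ℝ) else x i)) = x := by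
    funext i
    by_cases h : c ≤ x i
    · rw [if_pos h, max_eq_left h, min_eq_left (hneg i)]
    · rw [if_neg h, max_eq_right (le_of_not_ge h), min_eq_right (le_of_not_ge h)]
  have hmax : (fun i => max (max (x i) c) (if c ≤ x i then (0:ℝ) else x i)) =
      (fun i => max (if c ≤ x i then (0:ℝ) else x i) c) := by
    funext i
    by_cases h : c ≤ x i
    · rw [if_pos h, max_eq_left h]
      rw [max_eq_right (hneg i), max_eq_left hc0]
    · rw [if_neg h, max_eq_right (le_of_not_ge h)]
      exact max_eq_left (le_of_not_ge h)
  have hmod := hf σ (fun i => max (x i) c) (fun i => if c ≤ x i then (0:ℝ) else x i)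
    hamem hbmem hasort hbsort
  rw [hmin, hmax] at hmod
  linarith

lemma repr_of_invh {I : Set ℝ} (h0 : (0:ℝ) ∈ I) (hIneg : I ⊆ Set.Iic 0)
    {f : (Fin n → ℝ) → ℝ} (hf : InvHMax I f)
    (σ : Equiv.Perm (Fin n)) (x : Fin n → ℝ) (hx : ∀ i, x i ∈ I) (hs : inRσ σ x) :
    f x = f (fun _ => 0) + ∑ i ∈ Finset.range n,
      (f (Sv σ (Xv σ x i) (i+1)) - f (Sv σ (Xv σ x i) i)) := by
  suffices Q : ∀ k, ∀ x : Fin n → ℝ, (∀ i, x i ∈ I) → inRσ σ x →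
      (∀ j : Fin n, k ≤ (j : ℕ) → x (σ j) = 0) →
      f x = f (fun _ => 0) + ∑ i ∈ Finset.range n,
        (f (Sv σ (Xv σ x i) (i+1)) - f (Sv σ (Xv σ x i) i)) by
    exact Q n x hx hs (fun j hj => absurd j.isLt (by omega))
  intro k
  induction k using Nat.strong_induction_on with
  | _ k ih =>
  rcases k with _ | k'
  · intro x hx hs hz
    have hx0 : x = fun _ => 0 := by
      funext j
      have := hz (σ.symm j) (Nat.zero_le _)
      rwa [Equiv.apply_symm_apply] at this
    subst hx0
    have hzt : ∀ i ∈ Finset.range n,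
        (f (Sv σ (Xv σ (fun _ => (0:ℝ)) i) (i+1)) - f (Sv σ (Xv σ (fun _ => (0:ℝ)) i) i)) = 0 := by
      intro i _
      have hX : Xv σ (fun _ => (0:ℝ)) i = 0 := by unfold Xv; split_ifs <;> rfl
      rw [hX, Sv_zero, Sv_zero, sub_self]
    rw [Finset.sum_eq_zero hzt, add_zero]
  · intro x hx hs hz
    by_cases hkn : k' < n
    · have hvI : x (σ ⟨k', hkn⟩) ∈ I := hx _
      set v := x (σ ⟨k', hkn⟩) with hv
      by_cases hv0 : v = 0
      · refine ih k' (Nat.lt_succ_self _) x hx hs ?_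
        intro j hj
        rcases eq_or_lt_of_le hj with heq | hlt
        · have hje : j = ⟨k', hkn⟩ := Fin.ext heq.symm
          rw [hje, ← hv]; exact hv0
        · exact hz j hlt
      · have hvneg : v < 0 := lt_of_le_of_ne (hIneg hvI) hv0
        have hneg : ∀ i, x i ≤ 0 := fun i => hIneg (hx i)
        have hzero : ∀ j : Fin n, k' < (j : ℕ) → x (σ j) = 0 := fun j hj => hz j hj
        have hex : ∃ m : ℕ, v ≤ Xv σ x m := ⟨k', by rw [Xv_lt σ x hkn]⟩
        set m' := Nat.find hex with hm'
        have hm'le : m' ≤ k' := Nat.find_le (by rw [Xv_lt σ x hkn])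
        have hm'n : m' < n := lt_of_le_of_lt hm'le hkn
        have hlt' : ∀ i : ℕ, i < m' → Xv σ x i < v :=
          fun i hi => not_le.mp (Nat.find_min hex hi)
        have hge' : ∀ j : Fin n, m' ≤ (j : ℕ) → v ≤ x (σ j) := by
          intro j hj
          have h1 : v ≤ Xv σ x m' := Nat.find_spec hex
          have h2 : Xv σ x m' ≤ x (σ j) := by
            rw [Xv_lt σ x hm'n]
            exact hs ⟨m', hm'n⟩ j hj
          linarith
        set y : Fin n → ℝ := fun i => if v ≤ x i then (0:ℝ) else x i with hy
        have hy_lt : ∀ j : Fin n, (j : ℕ) < m' → y (σ j) = x (σ j) := by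
          intro j hj
          have hxj : x (σ j) < v := by
            have := hlt' j hj; rwa [Xv_fin] at this
          simp only [hy]
          exact if_neg (not_le.mpr hxj)
        have hy_ge : ∀ j : Fin n, m' ≤ (j : ℕ) → y (σ j) = 0 := by
          intro j hj
          simp only [hy]
          exact if_pos (hge' j hj)
        have hymem : ∀ i, y i ∈ I := by
          intro i; simp only [hy]; split_ifs; exacts [h0, hx i]
        have hysort : inRσ σ y := by
          intro i j hij
          rcases lt_or_ge ((j : ℕ)) m' with h | h
          · rw [hy_lt i (lt_of_le_of_lt hij h), hy_lt j h]; exact hs i j hij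
          · rw [hy_ge j h]
            rcases lt_or_ge ((i : ℕ)) m' with h2 | h2
            · rw [hy_lt i h2]; exact hneg _
            · rw [hy_ge i h2]
        have hinv := hf x hx v hvI
        have e1 : (fun i => max (x i) v) = Sv σ v (k'+1) := by
          funext j
          rw [Sv_apply]
          rcases lt_or_ge ((σ.symm j : Fin n) : ℕ) (k'+1) with h | h
          · rw [if_pos h]
            have hxle : x j ≤ v := by
              have := hs (σ.symm j) ⟨k', hkn⟩ (by exact Nat.lt_succ_iff.mp h)
              rwa [Equiv.apply_symm_apply] at this
            exact max_eq_right hxle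
          · rw [if_neg (not_lt.mpr h)]
            have hx0' : x j = 0 := by
              have := hzero (σ.symm j) (by omega)
              rwa [Equiv.apply_symm_apply] at this
            rw [hx0']
            exact max_eq_left (le_of_lt hvneg)
        have e2 : (fun i => max (if v ≤ x i then (0:ℝ) else x i) v) = Sv σ v m' := by
          funext j
          rw [Sv_apply]
          rcases lt_or_ge ((σ.symm j : Fin n) : ℕ) m' with h | h
          · rw [if_pos h]
            have hxlt : x (σ (σ.symm j)) < v := by
              have := hlt' (σ.symm j) h; rwa [Xv_fin] at this
            rw [Equiv.apply_symm_apply] at hxlt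
            rw [if_neg (not_le.mpr hxlt)]
            exact max_eq_right (le_of_lt hxlt)
          · rw [if_neg (not_lt.mpr h)]
            have hvle : v ≤ x (σ (σ.symm j)) := hge' (σ.symm j) h
            rw [Equiv.apply_symm_apply] at hvle
            rw [if_pos hvle]
            exact max_eq_left (le_of_lt hvneg)
        rw [e1, e2, ← hy] at hinv
        have hIH := ih m' (by omega) y hymem hysort (fun j hj => hy_ge j hj)
        -- sum manipulations
        have h1 : (∑ i ∈ Finset.Ico 0 m', (f (Sv σ (Xv σ x i) (i+1)) - f (Sv σ (Xv σ x i) i)))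
            + (∑ i ∈ Finset.Ico m' (k'+1), (f (Sv σ (Xv σ x i) (i+1)) - f (Sv σ (Xv σ x i) i)))
            = ∑ i ∈ Finset.Ico 0 (k'+1), (f (Sv σ (Xv σ x i) (i+1)) - f (Sv σ (Xv σ x i) i)) :=
          Finset.sum_Ico_consecutive _ (by omega) (by omega)
        have h2 : (∑ i ∈ Finset.Ico 0 (k'+1), (f (Sv σ (Xv σ x i) (i+1)) - f (Sv σ (Xv σ x i) i)))
            + (∑ i ∈ Finset.Ico (k'+1) n, (f (Sv σ (Xv σ x i) (i+1)) - f (Sv σ (Xv σ x i) i)))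
            = ∑ i ∈ Finset.Ico 0 n, (f (Sv σ (Xv σ x i) (i+1)) - f (Sv σ (Xv σ x i) i)) :=
          Finset.sum_Ico_consecutive _ (by omega) (by omega)
        have h3 : (∑ i ∈ Finset.Ico 0 m', (f (Sv σ (Xv σ y i) (i+1)) - f (Sv σ (Xv σ y i) i)))
            + (∑ i ∈ Finset.Ico m' n, (f (Sv σ (Xv σ y i) (i+1)) - f (Sv σ (Xv σ y i) i)))
            = ∑ i ∈ Finset.Ico 0 n, (f (Sv σ (Xv σ y i) (i+1)) - f (Sv σ (Xv σ y i) i)) :=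
          Finset.sum_Ico_consecutive _ (by omega) (by omega)
        have h4 : ∑ i ∈ Finset.Ico (k'+1) n, (f (Sv σ (Xv σ x i) (i+1)) - f (Sv σ (Xv σ x i) i)) = 0 := by
          refine Finset.sum_eq_zero fun i hi => ?_
          obtain ⟨hi1, hi2⟩ := Finset.mem_Ico.mp hi
          have hX : Xv σ x i = 0 := by
            rw [Xv_lt σ x hi2]; exact hzero ⟨i, hi2⟩ hi1
          rw [hX, Sv_zero, Sv_zero, sub_self]
        have h5 : ∑ i ∈ Finset.Ico m' n, (f (Sv σ (Xv σ y i) (i+1)) - f (Sv σ (Xv σ y i) i)) = 0 := by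
          refine Finset.sum_eq_zero fun i hi => ?_
          obtain ⟨hi1, hi2⟩ := Finset.mem_Ico.mp hi
          have hX : Xv σ y i = 0 := by
            rw [Xv_lt σ y hi2]; exact hy_ge ⟨i, hi2⟩ hi1
          rw [hX, Sv_zero, Sv_zero, sub_self]
        have h6 : ∑ i ∈ Finset.Ico 0 m', (f (Sv σ (Xv σ x i) (i+1)) - f (Sv σ (Xv σ x i) i))
            = ∑ i ∈ Finset.Ico 0 m', (f (Sv σ (Xv σ y i) (i+1)) - f (Sv σ (Xv σ y i) i)) := by
          refine Finset.sum_congr rfl fun i hi => ?_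
          obtain ⟨hi1, hi2⟩ := Finset.mem_Ico.mp hi
          have hin : i < n := lt_of_lt_of_le hi2 (le_of_lt hm'n)
          have hXe : Xv σ x i = Xv σ y i := by
            rw [Xv_lt σ x hin, Xv_lt σ y hin, hy_lt ⟨i, hin⟩ hi2]
          rw [hXe]
        have h7 : ∑ i ∈ Finset.Ico m' (k'+1), (f (Sv σ (Xv σ x i) (i+1)) - f (Sv σ (Xv σ x i) i))
            = f (Sv σ v (k'+1)) - f (Sv σ v m') := by
          have htel := telescope (fun k => f (Sv σ v k)) m' (k'+1) (by omega)
          rw [← htel]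
          refine Finset.sum_congr rfl fun i hi => ?_
          obtain ⟨hi1, hi2⟩ := Finset.mem_Ico.mp hi
          have hin : i < n := lt_of_lt_of_le hi2 hkn
          have hX : Xv σ x i = v := by
            rw [Xv_lt σ x hin]
            have hle := hs ⟨i, hin⟩ ⟨k', hkn⟩ (by exact Nat.lt_succ_iff.mp hi2)
            have hge := hge' ⟨i, hin⟩ hi1
            rw [hv]
            exact le_antisymm hle hge
          rw [hX]
        rw [Finset.range_eq_Ico] at hIH ⊢
        linarith
    · exact ih k' (Nat.lt_succ_self _) x hx hs (fun j hj => absurd j.isLt (by omega))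

end Stmt10Aux

/-- For `I ⊆ ℝ₋` an interval containing `0` and `f : Iⁿ → ℝ`, TFAE:
(i) `f` is comonotonically modular; (ii) `f` is invariant under horizontal
max-differences; (iii) there is `g : Iⁿ → ℝ` with
`f(x) = g(0) + Σᵢ (g(x_{σ(i)}·1_{A_σ^↓(i)}) − g(x_{σ(i)}·1_{A_σ^↓(i−1)}))` on each `Iⁿ_σ`;
moreover, in (iii) one can choose `g = f`. -/
theorem stmt10 {n : ℕ} (I : Set ℝ) (hI : I.OrdConnected) (h0 : (0 : ℝ) ∈ I)
    (hIneg : I ⊆ Set.Iic (0 : ℝ)) (f : (Fin n → ℝ) → ℝ) :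
    (ComonModular I f ↔ InvHMax I f) ∧
    (ComonModular I f ↔ ∃ g : (Fin n → ℝ) → ℝ,
      ∀ σ : Equiv.Perm (Fin n), ∀ x : Fin n → ℝ, (∀ i, x i ∈ I) → inRσ σ x →
        f x = g (fun _ => 0) + ∑ i : Fin n,
          (g (fun j => x (σ i) * ind (Adown σ ((i : ℕ) + 1)) j) -
           g (fun j => x (σ i) * ind (Adown σ (i : ℕ)) j))) ∧
    (ComonModular I f →
      ∀ σ : Equiv.Perm (Fin n), ∀ x : Fin n → ℝ, (∀ i, x i ∈ I) → inRσ σ x →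
        f x = f (fun _ => 0) + ∑ i : Fin n,
          (f (fun j => x (σ i) * ind (Adown σ ((i : ℕ) + 1)) j) -
           f (fun j => x (σ i) * ind (Adown σ (i : ℕ)) j))) := by
  have hA : ComonModular I f →
      ∀ σ : Equiv.Perm (Fin n), ∀ x : Fin n → ℝ, (∀ i, x i ∈ I) → inRσ σ x →
        f x = f (fun _ => 0) + ∑ i : Fin n,
          (f (fun j => x (σ i) * ind (Adown σ ((i : ℕ) + 1)) j) -
           f (fun j => x (σ i) * ind (Adown σ (i : ℕ)) j)) := by
    intro hf σ x hx hs
    rw [Stmt10Aux.sum_term_eq f σ x]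
    exact Stmt10Aux.repr_of_modular h0 hIneg hf σ x hx hs
  have hD : InvHMax I f →
      ∀ σ : Equiv.Perm (Fin n), ∀ x : Fin n → ℝ, (∀ i, x i ∈ I) → inRσ σ x →
        f x = f (fun _ => 0) + ∑ i : Fin n,
          (f (fun j => x (σ i) * ind (Adown σ ((i : ℕ) + 1)) j) -
           f (fun j => x (σ i) * ind (Adown σ (i : ℕ)) j)) := by
    intro hf σ x hx hs
    rw [Stmt10Aux.sum_term_eq f σ x]
    exact Stmt10Aux.repr_of_invh h0 hIneg hf σ x hx hs
  refine ⟨⟨Stmt10Aux.invh_of_modular hI h0 hIneg,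
      fun h => Stmt10Aux.modular_of_repr (hD h)⟩,
    ⟨fun h => ⟨f, hA h⟩, fun ⟨g, hg⟩ => Stmt10Aux.modular_of_repr hg⟩, hA⟩
end

section
/- Let I be a real interval containing 0 and let f : Iⁿ → ℝ. Then the following are equivalent: (i) f is comonotonically modular; (ii) the restrictions of f to I₊ⁿ and to I₋ⁿ are comonotonically modular and f_0(x) = f_0(x⁺) + f_0(−x⁻) for every x ∈ Iⁿ, where f_0 = f − f(0,…,0); (iii) there exist functions g : I₊ⁿ → ℝ and h : I₋ⁿ → ℝ such that for every permutation σ of [n] and every x ∈ Iⁿ ∩ ℝⁿ_σ, f_0(x) = Σ_{i=1}^{p} (h(x_{σ(i)}·1_{A_σ^↓(i)}) − h(x_{σ(i)}·1_{A_σ^↓(i−1)})) + Σ_{i=p+1}^{n} (g(x_{σ(i)}·1_{A_σ^↑(i)}) − g(x_{σ(i)}·1_{A_σ^↑(i+1)})), where p ∈ {0,…,n} is such that x_{σ(p)} < 0 ≤ x_{σ(p+1)}. Moreover, in (ii) and (iii) one can choose g and h to be the restrictions of f to I₊ⁿ and I₋ⁿ. -/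
open Finset

namespace S11

variable {n : ℕ}

lemma mem_Aup {σ : Equiv.Perm (Fin n)} {k : ℕ} {j : Fin n} :
    j ∈ Aup σ k ↔ k ≤ ((σ.symm j : Fin n) : ℕ) := by
  simp only [Aup, Finset.mem_image, Finset.mem_filter, Finset.mem_univ, true_and]
  constructor
  · rintro ⟨a, ha, rfl⟩; simpa using ha
  · intro h; exact ⟨σ.symm j, h, by simp⟩

lemma mem_Adown {σ : Equiv.Perm (Fin n)} {k : ℕ} {j : Fin n} :
    j ∈ Adown σ k ↔ ((σ.symm j : Fin n) : ℕ) < k := by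
  simp only [Adown, Finset.mem_image, Finset.mem_filter, Finset.mem_univ, true_and]
  constructor
  · rintro ⟨a, ha, rfl⟩; simpa using ha
  · intro h; exact ⟨σ.symm j, h, by simp⟩

lemma step_Aup (σ : Equiv.Perm (Fin n)) (t : ℝ) (k : ℕ) :
    (fun j => t * ind (Aup σ k) j) =
      fun j : Fin n => if k ≤ ((σ.symm j : Fin n) : ℕ) then t else 0 := by
  funext j
  simp only [ind]
  by_cases h : j ∈ Aup σ k
  · rw [if_pos h, if_pos (mem_Aup.mp h), mul_one]
  · rw [if_neg h, if_neg (fun hc => h (mem_Aup.mpr hc)), mul_zero]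

lemma step_Adown (σ : Equiv.Perm (Fin n)) (t : ℝ) (k : ℕ) :
    (fun j => t * ind (Adown σ k) j) =
      fun j : Fin n => if ((σ.symm j : Fin n) : ℕ) < k then t else 0 := by
  funext j
  simp only [ind]
  by_cases h : j ∈ Adown σ k
  · rw [if_pos h, if_pos (mem_Adown.mp h), mul_one]
  · rw [if_neg h, if_neg (fun hc => h (mem_Adown.mpr hc)), mul_zero]

def wUp (σ : Equiv.Perm (Fin n)) (x : Fin n → ℝ) (k : ℕ) : Fin n → ℝ :=
  fun j => if k ≤ ((σ.symm j : Fin n) : ℕ) then x j else 0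
def wDn (σ : Equiv.Perm (Fin n)) (x : Fin n → ℝ) (k : ℕ) : Fin n → ℝ :=
  fun j => if ((σ.symm j : Fin n) : ℕ) < k then x j else 0

lemma wUp_top (σ : Equiv.Perm (Fin n)) (x : Fin n → ℝ) : wUp σ x n = fun _ => 0 := by
  funext j; simp [wUp, Nat.not_le.mpr (Fin.is_lt _)]
lemma wDn_bot (σ : Equiv.Perm (Fin n)) (x : Fin n → ℝ) : wDn σ x 0 = fun _ => 0 := by
  funext j; simp [wDn]

section Step
variable {I : Set ℝ} {f : (Fin n → ℝ) → ℝ} (hf : ComonModular I f) (h0 : (0:ℝ) ∈ I)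
  {σ : Equiv.Perm (Fin n)} {x : Fin n → ℝ} (hx : ∀ i, x i ∈ I) (hσ : inRσ σ x)

include hf h0 hx hσ in
lemma step_up {k : ℕ} (hkn : k < n) (ht : 0 ≤ x (σ ⟨k, hkn⟩)) :
    f (wUp σ x k) + f (fun j => x (σ ⟨k, hkn⟩) * ind (Aup σ (k+1)) j)
      = f (fun j => x (σ ⟨k, hkn⟩) * ind (Aup σ k) j) + f (wUp σ x (k+1)) := by
  set t := x (σ ⟨k, hkn⟩) with htdef
  rw [step_Aup, step_Aup]
  have key := hf σ (wUp σ x (k+1))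
      (fun j : Fin n => if k ≤ ((σ.symm j : Fin n) : ℕ) then t else 0)
      (fun j => by by_cases h : k+1 ≤ ((σ.symm j : Fin n) : ℕ) <;> simp [wUp, h, hx j, h0])
      (fun j => by by_cases h : k ≤ ((σ.symm j : Fin n) : ℕ) <;> simp [h, hx, h0, htdef])
      (fun i j hij => by
        simp only [wUp, Equiv.symm_apply_apply]
        have hij' : (i:ℕ) ≤ j := hij
        by_cases hi : k+1 ≤ (i:ℕ)
        · rw [if_pos hi, if_pos (hi.trans hij')]; exact hσ i j hij
        · rw [if_neg hi]
          by_cases hj : k+1 ≤ (j:ℕ)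
          · rw [if_pos hj]
            exact le_trans ht (hσ ⟨k, hkn⟩ j (by simpa [Fin.le_def] using Nat.le_of_succ_le hj))
          · rw [if_neg hj])
      (fun i j hij => by
        simp only [Equiv.symm_apply_apply]
        have hij' : (i:ℕ) ≤ j := hij
        by_cases hi : k ≤ (i:ℕ)
        · rw [if_pos hi, if_pos (hi.trans hij')]
        · rw [if_neg hi]
          by_cases hj : k ≤ (j:ℕ)
          · rw [if_pos hj]; exact ht
          · rw [if_neg hj])
  have hmin : (fun j : Fin n => min (wUp σ x (k+1) j)
      (if k ≤ ((σ.symm j : Fin n) : ℕ) then t else 0)) =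
      fun j : Fin n => if k+1 ≤ ((σ.symm j : Fin n) : ℕ) then t else 0 := by
    funext j
    simp only [wUp]
    rcases lt_trichotomy ((σ.symm j : Fin n) : ℕ) k with h | h | h
    · rw [if_neg (by omega), if_neg (by omega), if_neg (by omega), min_self]
    · rw [if_neg (by omega), if_pos (by omega), if_neg (by omega)]
      have : σ.symm j = ⟨k, hkn⟩ := Fin.ext h
      rw [min_eq_left ht]
    · rw [if_pos (by omega), if_pos (by omega), if_pos (by omega)]
      have hjx : j = σ (σ.symm j) := (Equiv.apply_symm_apply σ j).symm
      rw [min_eq_right]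
      rw [hjx]
      exact hσ ⟨k, hkn⟩ (σ.symm j) (by simpa [Fin.le_def] using Nat.le_of_lt h)
  have hmax : (fun j : Fin n => max (wUp σ x (k+1) j)
      (if k ≤ ((σ.symm j : Fin n) : ℕ) then t else 0)) = wUp σ x k := by
    funext j
    simp only [wUp]
    rcases lt_trichotomy ((σ.symm j : Fin n) : ℕ) k with h | h | h
    · rw [if_neg (by omega), if_neg (by omega), if_neg (by omega), max_self]
    · rw [if_neg (by omega), if_pos (by omega), if_pos (by omega)]
      have hj : σ.symm j = ⟨k, hkn⟩ := Fin.ext h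
      have : x j = t := by rw [htdef, ← hj, Equiv.apply_symm_apply]
      rw [max_eq_right (this ▸ ht), this]
    · rw [if_pos (by omega), if_pos (by omega), if_pos (by omega)]
      have hjx : j = σ (σ.symm j) := (Equiv.apply_symm_apply σ j).symm
      rw [max_eq_left]
      rw [hjx]
      exact hσ ⟨k, hkn⟩ (σ.symm j) (by simpa [Fin.le_def] using Nat.le_of_lt h)
  rw [hmin, hmax] at key
  linarith

include hf h0 hx hσ in
lemma step_dn {k : ℕ} (hkn : k < n) (ht : x (σ ⟨k, hkn⟩) < 0) :
    f (wDn σ x k) + f (fun j => x (σ ⟨k, hkn⟩) * ind (Adown σ (k+1)) j)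
      = f (wDn σ x (k+1)) + f (fun j => x (σ ⟨k, hkn⟩) * ind (Adown σ k) j) := by
  set t := x (σ ⟨k, hkn⟩) with htdef
  rw [step_Adown, step_Adown]
  have key := hf σ (wDn σ x k)
      (fun j : Fin n => if ((σ.symm j : Fin n) : ℕ) < k+1 then t else 0)
      (fun j => by by_cases h : ((σ.symm j : Fin n) : ℕ) < k <;> simp [wDn, h, hx j, h0])
      (fun j => by by_cases h : ((σ.symm j : Fin n) : ℕ) < k+1 <;> simp [h, hx, h0, htdef])
      (fun i j hij => by
        simp only [wDn, Equiv.symm_apply_apply]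
        have hij' : (i:ℕ) ≤ j := hij
        by_cases hj : (j:ℕ) < k
        · rw [if_pos hj, if_pos (by omega)]; exact hσ i j hij
        · rw [if_neg hj]
          by_cases hi : (i:ℕ) < k
          · rw [if_pos hi]
            exact le_of_lt (lt_of_le_of_lt
              (hσ i ⟨k, hkn⟩ (by simpa [Fin.le_def] using Nat.le_of_lt hi)) ht)
          · rw [if_neg hi])
      (fun i j hij => by
        simp only [Equiv.symm_apply_apply]
        have hij' : (i:ℕ) ≤ j := hij
        by_cases hj : (j:ℕ) < k+1
        · rw [if_pos hj, if_pos (by omega)]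
        · rw [if_neg hj]
          by_cases hi : (i:ℕ) < k+1
          · rw [if_pos hi]; exact le_of_lt ht
          · rw [if_neg hi])
  have hmin : (fun j : Fin n => min (wDn σ x k j)
      (if ((σ.symm j : Fin n) : ℕ) < k+1 then t else 0)) = wDn σ x (k+1) := by
    funext j
    simp only [wDn]
    rcases lt_trichotomy ((σ.symm j : Fin n) : ℕ) k with h | h | h
    · rw [if_pos h, if_pos (by omega), if_pos (by omega)]
      have hjx : j = σ (σ.symm j) := (Equiv.apply_symm_apply σ j).symm
      rw [min_eq_left]
      rw [hjx]
      exact hσ (σ.symm j) ⟨k, hkn⟩ (by simpa [Fin.le_def] using Nat.le_of_lt h)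
    · rw [if_neg (by omega), if_pos (by omega), if_pos (by omega)]
      have hj : σ.symm j = ⟨k, hkn⟩ := Fin.ext h
      have hxj : x j = t := by rw [htdef, ← hj, Equiv.apply_symm_apply]
      rw [min_eq_right (le_of_lt (hxj ▸ ht)), hxj]
    · rw [if_neg (by omega), if_neg (by omega), if_neg (by omega), min_self]
  have hmax : (fun j : Fin n => max (wDn σ x k j)
      (if ((σ.symm j : Fin n) : ℕ) < k+1 then t else 0)) =
      fun j : Fin n => if ((σ.symm j : Fin n) : ℕ) < k then t else 0 := by
    funext j
    simp only [wDn]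
    rcases lt_trichotomy ((σ.symm j : Fin n) : ℕ) k with h | h | h
    · rw [if_pos h, if_pos (by omega), if_pos (by omega)]
      have hjx : j = σ (σ.symm j) := (Equiv.apply_symm_apply σ j).symm
      rw [max_eq_right]
      rw [hjx]
      exact hσ (σ.symm j) ⟨k, hkn⟩ (by simpa [Fin.le_def] using Nat.le_of_lt h)
    · rw [if_neg (by omega), if_pos (by omega), if_neg (by omega)]
      rw [max_eq_left (le_of_lt ht)]
    · rw [if_neg (by omega), if_neg (by omega), if_neg (by omega), max_self]
  rw [hmin, hmax] at key
  linarith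

/-- Upward term at index `i : ℕ`. -/
def termUp (f : (Fin n → ℝ) → ℝ) (σ : Equiv.Perm (Fin n)) (x : Fin n → ℝ) (i : ℕ) : ℝ :=
  if h : i < n then
    f (fun j => x (σ ⟨i, h⟩) * ind (Aup σ i) j) -
    f (fun j => x (σ ⟨i, h⟩) * ind (Aup σ (i+1)) j)
  else 0
def termDn (f : (Fin n → ℝ) → ℝ) (σ : Equiv.Perm (Fin n)) (x : Fin n → ℝ) (i : ℕ) : ℝ :=
  if h : i < n then
    f (fun j => x (σ ⟨i, h⟩) * ind (Adown σ (i+1)) j) -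
    f (fun j => x (σ ⟨i, h⟩) * ind (Adown σ i) j)
  else 0

include hf h0 hx hσ in
lemma tel_up : ∀ m k : ℕ, k + m = n → (∀ i : Fin n, k ≤ (i:ℕ) → 0 ≤ x (σ i)) →
    f (wUp σ x k) - f (fun _ => 0) = ∑ i ∈ Finset.Ico k n, termUp f σ x i := by
  intro m
  induction m with
  | zero =>
    intro k hk _
    rw [Nat.add_zero] at hk
    subst hk
    rw [wUp_top, Finset.Ico_self, Finset.sum_empty, sub_self]
  | succ m ih =>
    intro k hk hpos
    have hkn : k < n := by omega
    have hstep := step_up hf h0 hx hσ hkn (hpos ⟨k, hkn⟩ le_rfl)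
    have hih := ih (k+1) (by omega) (fun i hi => hpos i (by omega))
    rw [Finset.sum_eq_sum_Ico_succ_bot hkn]
    rw [termUp, dif_pos hkn]
    linarith

include hf h0 hx hσ in
lemma tel_dn : ∀ k : ℕ, k ≤ n → (∀ i : Fin n, (i:ℕ) < k → x (σ i) < 0) →
    f (wDn σ x k) - f (fun _ => 0) = ∑ i ∈ Finset.Ico 0 k, termDn f σ x i := by
  intro k
  induction k with
  | zero => intro _ _; rw [wDn_bot, Finset.Ico_self, Finset.sum_empty, sub_self]
  | succ k ih =>
    intro hk hneg
    have hkn : k < n := by omega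
    have hstep := step_dn hf h0 hx hσ hkn (hneg ⟨k, hkn⟩ (Nat.lt_succ_self k))
    have hih := ih (by omega) (fun i hi => hneg i (by omega))
    rw [Finset.sum_Ico_succ_top (Nat.zero_le k)]
    rw [termDn, dif_pos hkn]
    linarith

include hf h0 hx hσ in
lemma core (p : ℕ) (hp : p ≤ n)
    (hneg : ∀ i : Fin n, (i : ℕ) < p → x (σ i) < 0)
    (hpos : ∀ i : Fin n, p ≤ (i : ℕ) → 0 ≤ x (σ i)) :
    f x - f (fun _ => 0) =
      ∑ i : Fin n,
        (if (i : ℕ) < p then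
          f (fun j => x (σ i) * ind (Adown σ ((i : ℕ) + 1)) j) -
          f (fun j => x (σ i) * ind (Adown σ (i : ℕ)) j)
         else
          f (fun j => x (σ i) * ind (Aup σ (i : ℕ)) j) -
          f (fun j => x (σ i) * ind (Aup σ ((i : ℕ) + 1)) j)) := by
  have hdecomp := hf σ x (fun _ => 0) hx (fun _ => h0) hσ (fun i j _ => le_refl 0)
  have hminw : (fun i => min (x i) ((fun _ => (0:ℝ)) i)) = wDn σ x p := by
    funext j
    simp only [wDn]
    by_cases h : ((σ.symm j : Fin n) : ℕ) < p
    · rw [if_pos h]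
      have := hneg (σ.symm j) h
      rw [Equiv.apply_symm_apply] at this
      exact min_eq_left (le_of_lt this)
    · rw [if_neg h]
      have := hpos (σ.symm j) (by omega)
      rw [Equiv.apply_symm_apply] at this
      exact min_eq_right this
  have hmaxw : (fun i => max (x i) ((fun _ => (0:ℝ)) i)) = wUp σ x p := by
    funext j
    simp only [wUp]
    by_cases h : p ≤ ((σ.symm j : Fin n) : ℕ)
    · rw [if_pos h]
      have := hpos (σ.symm j) h
      rw [Equiv.apply_symm_apply] at this
      exact max_eq_left this
    · rw [if_neg h]
      have := hneg (σ.symm j) (by omega)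
      rw [Equiv.apply_symm_apply] at this
      exact max_eq_right (le_of_lt this)
  rw [hminw, hmaxw] at hdecomp
  have hup := tel_up hf h0 hx hσ (n - p) p (by omega) hpos
  have hdn := tel_dn hf h0 hx hσ p hp hneg
  have hsum : (∑ i : Fin n,
        (if (i : ℕ) < p then
          f (fun j => x (σ i) * ind (Adown σ ((i : ℕ) + 1)) j) -
          f (fun j => x (σ i) * ind (Adown σ (i : ℕ)) j)
         else
          f (fun j => x (σ i) * ind (Aup σ (i : ℕ)) j) -
          f (fun j => x (σ i) * ind (Aup σ ((i : ℕ) + 1)) j)))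
      = (∑ i ∈ Finset.Ico 0 p, termDn f σ x i) + ∑ i ∈ Finset.Ico p n, termUp f σ x i := by
    have h1 : ∀ i : Fin n,
        (if (i : ℕ) < p then
          f (fun j => x (σ i) * ind (Adown σ ((i : ℕ) + 1)) j) -
          f (fun j => x (σ i) * ind (Adown σ (i : ℕ)) j)
         else
          f (fun j => x (σ i) * ind (Aup σ (i : ℕ)) j) -
          f (fun j => x (σ i) * ind (Aup σ ((i : ℕ) + 1)) j))
        = (fun m : ℕ => if m < p then termDn f σ x m else termUp f σ x m) (i : ℕ) := by
      intro i
      simp only [termUp, termDn, dif_pos i.isLt, Fin.eta]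
    rw [Finset.sum_congr rfl (fun i _ => h1 i)]
    refine (Fin.sum_univ_eq_sum_range
      (fun m : ℕ => if m < p then termDn f σ x m else termUp f σ x m) n).trans ?_
    rw [Finset.range_eq_Ico,
      ← Finset.sum_Ico_consecutive _ (Nat.zero_le p) hp]
    congr 1
    · exact Finset.sum_congr rfl (fun i hi => by
        rw [if_pos (Finset.mem_Ico.mp hi).2])
    · exact Finset.sum_congr rfl (fun i hi => by
        rw [if_neg (Nat.not_lt.mpr (Finset.mem_Ico.mp hi).1)])
  rw [hsum]
  linarith
end Step

variable {n : ℕ}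

lemma exists_sort (x : Fin n → ℝ) : ∃ σ : Equiv.Perm (Fin n), inRσ σ x :=
  ⟨Tuple.sort x, fun _ _ hij => Tuple.monotone_sort x hij⟩

lemma exists_p (σ : Equiv.Perm (Fin n)) (z : Fin n → ℝ) (hσ : inRσ σ z) :
    ∃ p : ℕ, p ≤ n ∧ (∀ i : Fin n, (i:ℕ) < p → z (σ i) < 0) ∧
      (∀ i : Fin n, p ≤ (i:ℕ) → 0 ≤ z (σ i)) := by
  by_cases hS : (Finset.univ.filter fun i : Fin n => 0 ≤ z (σ i)).Nonempty
  · set i0 := (Finset.univ.filter fun i : Fin n => 0 ≤ z (σ i)).min' hS with hi0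
    refine ⟨(i0 : ℕ), i0.isLt.le, ?_, ?_⟩
    · intro i hi
      by_contra hc
      push_neg at hc
      have h1 : i0 ≤ i := Finset.min'_le _ i (by simp [hc])
      rw [Fin.le_def] at h1
      omega
    · intro i hi
      have h1 : 0 ≤ z (σ i0) := (Finset.mem_filter.mp (Finset.min'_mem _ hS)).2
      exact le_trans h1 (hσ i0 i (by rwa [Fin.le_def]))
  · refine ⟨n, le_rfl, fun i _ => ?_, fun i hi => absurd i.isLt (by omega)⟩
    by_contra hc
    push_neg at hc
    exact hS ⟨i, by simp [hc]⟩

/-- (iii) → (i) -/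
lemma of_formula {I : Set ℝ} {f : (Fin n → ℝ) → ℝ} (g h : (Fin n → ℝ) → ℝ)
    (H : ∀ σ : Equiv.Perm (Fin n), ∀ x : Fin n → ℝ, (∀ i, x i ∈ I) → inRσ σ x →
      ∀ p : ℕ, p ≤ n →
        (∀ i : Fin n, (i : ℕ) < p → x (σ i) < 0) →
        (∀ i : Fin n, p ≤ (i : ℕ) → 0 ≤ x (σ i)) →
        f x - f (fun _ => 0) =
          ∑ i : Fin n,
            (if (i : ℕ) < p then
              h (fun j => x (σ i) * ind (Adown σ ((i : ℕ) + 1)) j) -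
              h (fun j => x (σ i) * ind (Adown σ (i : ℕ)) j)
             else
              g (fun j => x (σ i) * ind (Aup σ (i : ℕ)) j) -
              g (fun j => x (σ i) * ind (Aup σ ((i : ℕ) + 1)) j))) :
    ComonModular I f := by
  intro σ x y hx hy hσx hσy
  set T : Fin n → ℝ → ℝ := fun i t =>
    if t < 0 then
      h (fun j => t * ind (Adown σ ((i : ℕ) + 1)) j) -
      h (fun j => t * ind (Adown σ (i : ℕ)) j)
    else
      g (fun j => t * ind (Aup σ (i : ℕ)) j) -
      g (fun j => t * ind (Aup σ ((i : ℕ) + 1)) j) with hT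
  have key : ∀ z : Fin n → ℝ, (∀ i, z i ∈ I) → inRσ σ z →
      f z - f (fun _ => 0) = ∑ i : Fin n, T i (z (σ i)) := by
    intro z hz hσz
    obtain ⟨p, hp, hneg, hpos⟩ := exists_p σ z hσz
    rw [H σ z hz hσz p hp hneg hpos]
    refine Finset.sum_congr rfl fun i _ => ?_
    simp only [hT]
    by_cases hip : (i : ℕ) < p
    · rw [if_pos hip, if_pos (hneg i hip)]
    · rw [if_neg hip, if_neg (not_lt.mpr (hpos i (Nat.le_of_not_lt hip)))]
  have hminmem : ∀ i, min (x i) (y i) ∈ I := fun i => by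
    rcases le_total (x i) (y i) with hc | hc
    · rw [min_eq_left hc]; exact hx i
    · rw [min_eq_right hc]; exact hy i
  have hmaxmem : ∀ i, max (x i) (y i) ∈ I := fun i => by
    rcases le_total (x i) (y i) with hc | hc
    · rw [max_eq_right hc]; exact hy i
    · rw [max_eq_left hc]; exact hx i
  have hminσ : inRσ σ (fun i => min (x i) (y i)) :=
    fun i j hij => min_le_min (hσx i j hij) (hσy i j hij)
  have hmaxσ : inRσ σ (fun i => max (x i) (y i)) :=
    fun i j hij => max_le_max (hσx i j hij) (hσy i j hij)
  have k1 := key x hx hσx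
  have k2 := key y hy hσy
  have k3 := key _ hminmem hminσ
  have k4 := key _ hmaxmem hmaxσ
  have S : (∑ i : Fin n, T i (x (σ i))) + (∑ i : Fin n, T i (y (σ i))) =
      (∑ i : Fin n, T i ((fun i => min (x i) (y i)) (σ i))) +
      (∑ i : Fin n, T i ((fun i => max (x i) (y i)) (σ i))) := by
    rw [← Finset.sum_add_distrib, ← Finset.sum_add_distrib]
    refine Finset.sum_congr rfl fun i _ => ?_
    show T i (x (σ i)) + T i (y (σ i)) =
      T i (min (x (σ i)) (y (σ i))) + T i (max (x (σ i)) (y (σ i)))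
    rcases le_total (x (σ i)) (y (σ i)) with hc | hc
    · rw [min_eq_left hc, max_eq_right hc]
    · rw [min_eq_right hc, max_eq_left hc]; exact add_comm _ _
  linarith

/-- (ii) → (i) -/
lemma of_parts {I : Set ℝ} {f : (Fin n → ℝ) → ℝ} (h0 : (0:ℝ) ∈ I)
    (hplus : ComonModular (I ∩ Set.Ici (0:ℝ)) f)
    (hminus : ComonModular (I ∩ Set.Iic (0:ℝ)) f)
    (hdec : ∀ x : Fin n → ℝ, (∀ i, x i ∈ I) →
      f x - f (fun _ => 0) =
        (f (fun i => max (x i) 0) - f (fun _ => 0)) +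
        (f (fun i => min (x i) 0) - f (fun _ => 0))) :
    ComonModular I f := by
  intro σ x y hx hy hσx hσy
  have hxp : ∀ i, max (x i) 0 ∈ I ∩ Set.Ici (0:ℝ) := fun i => by
    rcases le_total (x i) 0 with hc | hc
    · rw [max_eq_right hc]; exact ⟨h0, Set.mem_Ici.mpr le_rfl⟩
    · rw [max_eq_left hc]; exact ⟨hx i, hc⟩
  have hyp : ∀ i, max (y i) 0 ∈ I ∩ Set.Ici (0:ℝ) := fun i => by
    rcases le_total (y i) 0 with hc | hc
    · rw [max_eq_right hc]; exact ⟨h0, Set.mem_Ici.mpr le_rfl⟩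
    · rw [max_eq_left hc]; exact ⟨hy i, hc⟩
  have hxm : ∀ i, min (x i) 0 ∈ I ∩ Set.Iic (0:ℝ) := fun i => by
    rcases le_total (x i) 0 with hc | hc
    · rw [min_eq_left hc]; exact ⟨hx i, hc⟩
    · rw [min_eq_right hc]; exact ⟨h0, Set.mem_Iic.mpr le_rfl⟩
  have hym : ∀ i, min (y i) 0 ∈ I ∩ Set.Iic (0:ℝ) := fun i => by
    rcases le_total (y i) 0 with hc | hc
    · rw [min_eq_left hc]; exact ⟨hy i, hc⟩
    · rw [min_eq_right hc]; exact ⟨h0, Set.mem_Iic.mpr le_rfl⟩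
  have Hp := hplus σ (fun i => max (x i) 0) (fun i => max (y i) 0) hxp hyp
    (fun i j hij => max_le_max (hσx i j hij) le_rfl)
    (fun i j hij => max_le_max (hσy i j hij) le_rfl)
  have Hm := hminus σ (fun i => min (x i) 0) (fun i => min (y i) 0) hxm hym
    (fun i j hij => min_le_min (hσx i j hij) le_rfl)
    (fun i j hij => min_le_min (hσy i j hij) le_rfl)
  have e1 : (fun i => min ((fun i => max (x i) 0) i) ((fun i => max (y i) 0) i)) =
      fun i => max (min (x i) (y i)) 0 :=
    funext fun i => (max_min_distrib_right (x i) (y i) 0).symm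
  have e2 : (fun i => max ((fun i => max (x i) 0) i) ((fun i => max (y i) 0) i)) =
      fun i => max (max (x i) (y i)) 0 :=
    funext fun i => by rw [max_max_max_comm, max_self]
  have e3 : (fun i => min ((fun i => min (x i) 0) i) ((fun i => min (y i) 0) i)) =
      fun i => min (min (x i) (y i)) 0 :=
    funext fun i => by rw [min_min_min_comm, min_self]
  have e4 : (fun i => max ((fun i => min (x i) 0) i) ((fun i => min (y i) 0) i)) =
      fun i => min (max (x i) (y i)) 0 :=
    funext fun i => (min_max_distrib_right (x i) (y i) 0).symm
  rw [e1, e2] at Hp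
  rw [e3, e4] at Hm
  have hminmem : ∀ i, min (x i) (y i) ∈ I := fun i => by
    rcases le_total (x i) (y i) with hc | hc
    · rw [min_eq_left hc]; exact hx i
    · rw [min_eq_right hc]; exact hy i
  have hmaxmem : ∀ i, max (x i) (y i) ∈ I := fun i => by
    rcases le_total (x i) (y i) with hc | hc
    · rw [max_eq_right hc]; exact hy i
    · rw [max_eq_left hc]; exact hx i
  have d1 := hdec x hx
  have d2 := hdec y hy
  have d3 := hdec (fun i => min (x i) (y i)) hminmem
  have d4 := hdec (fun i => max (x i) (y i)) hmaxmem
  simp only [] at d3 d4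
  linarith

end S11

/-- For an interval `I ∋ 0` and `f : Iⁿ → ℝ`, TFAE:
(i) `f` is comonotonically modular;
(ii) the restrictions of `f` to `I₊ⁿ` and `I₋ⁿ` are comonotonically modular and
`f_0(x) = f_0(x⁺) + f_0(−x⁻)` on `Iⁿ`;
(iii) there are `g : I₊ⁿ → ℝ`, `h : I₋ⁿ → ℝ` such that, on each `Iⁿ_σ`, with `p` such that
`x_{σ(p)} < 0 ≤ x_{σ(p+1)}`,
`f_0(x) = Σ_{i≤p} (h(x_{σ(i)}·1_{A_σ^↓(i)}) − h(x_{σ(i)}·1_{A_σ^↓(i−1)}))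
        + Σ_{i>p} (g(x_{σ(i)}·1_{A_σ^↑(i)}) − g(x_{σ(i)}·1_{A_σ^↑(i+1)}))`;
moreover, in (iii) one can choose `g` and `h` to be the restrictions of `f`. -/
theorem stmt11 {n : ℕ} (I : Set ℝ) (hI : I.OrdConnected) (h0 : (0 : ℝ) ∈ I)
    (f : (Fin n → ℝ) → ℝ) :
    (ComonModular I f ↔
      (ComonModular (I ∩ Set.Ici (0 : ℝ)) f ∧ ComonModular (I ∩ Set.Iic (0 : ℝ)) f ∧
       ∀ x : Fin n → ℝ, (∀ i, x i ∈ I) →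
         f x - f (fun _ => 0) =
           (f (fun i => max (x i) 0) - f (fun _ => 0)) +
           (f (fun i => min (x i) 0) - f (fun _ => 0)))) ∧
    (ComonModular I f ↔
      ∃ g h : (Fin n → ℝ) → ℝ,
        ∀ σ : Equiv.Perm (Fin n), ∀ x : Fin n → ℝ, (∀ i, x i ∈ I) → inRσ σ x →
          ∀ p : ℕ, p ≤ n →
            (∀ i : Fin n, (i : ℕ) < p → x (σ i) < 0) →
            (∀ i : Fin n, p ≤ (i : ℕ) → 0 ≤ x (σ i)) →
            f x - f (fun _ => 0) =
              ∑ i : Fin n,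
                (if (i : ℕ) < p then
                  h (fun j => x (σ i) * ind (Adown σ ((i : ℕ) + 1)) j) -
                  h (fun j => x (σ i) * ind (Adown σ (i : ℕ)) j)
                 else
                  g (fun j => x (σ i) * ind (Aup σ (i : ℕ)) j) -
                  g (fun j => x (σ i) * ind (Aup σ ((i : ℕ) + 1)) j))) ∧
    (ComonModular I f →
      ∀ σ : Equiv.Perm (Fin n), ∀ x : Fin n → ℝ, (∀ i, x i ∈ I) → inRσ σ x →
        ∀ p : ℕ, p ≤ n →
          (∀ i : Fin n, (i : ℕ) < p → x (σ i) < 0) →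
          (∀ i : Fin n, p ≤ (i : ℕ) → 0 ≤ x (σ i)) →
          f x - f (fun _ => 0) =
            ∑ i : Fin n,
              (if (i : ℕ) < p then
                f (fun j => x (σ i) * ind (Adown σ ((i : ℕ) + 1)) j) -
                f (fun j => x (σ i) * ind (Adown σ (i : ℕ)) j)
               else
                f (fun j => x (σ i) * ind (Aup σ (i : ℕ)) j) -
                f (fun j => x (σ i) * ind (Aup σ ((i : ℕ) + 1)) j))) := by
  have core' : ComonModular I f →
      ∀ σ : Equiv.Perm (Fin n), ∀ x : Fin n → ℝ, (∀ i, x i ∈ I) → inRσ σ x →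
        ∀ p : ℕ, p ≤ n →
          (∀ i : Fin n, (i : ℕ) < p → x (σ i) < 0) →
          (∀ i : Fin n, p ≤ (i : ℕ) → 0 ≤ x (σ i)) →
          f x - f (fun _ => 0) =
            ∑ i : Fin n,
              (if (i : ℕ) < p then
                f (fun j => x (σ i) * ind (Adown σ ((i : ℕ) + 1)) j) -
                f (fun j => x (σ i) * ind (Adown σ (i : ℕ)) j)
               else
                f (fun j => x (σ i) * ind (Aup σ (i : ℕ)) j) -
                f (fun j => x (σ i) * ind (Aup σ ((i : ℕ) + 1)) j)) :=
    fun hf σ x hx hσ p hp hneg hpos => S11.core hf h0 hx hσ p hp hneg hpos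
  refine ⟨⟨fun hf => ⟨?_, ?_, ?_⟩, fun ⟨h1, h2, h3⟩ => S11.of_parts h0 h1 h2 h3⟩,
    ⟨fun hf => ⟨f, f, core' hf⟩, fun ⟨g, h, H⟩ => S11.of_formula g h H⟩, core'⟩
  · exact fun σ x y hx hy hσx hσy =>
      hf σ x y (fun i => (hx i).1) (fun i => (hy i).1) hσx hσy
  · exact fun σ x y hx hy hσx hσy =>
      hf σ x y (fun i => (hx i).1) (fun i => (hy i).1) hσx hσy
  · intro x hx
    obtain ⟨σ, hσ⟩ := S11.exists_sort x
    have key : f x + f (fun _ => 0) =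
        f (fun i => min (x i) 0) + f (fun i => max (x i) 0) :=
      hf σ x (fun _ => 0) hx (fun _ => h0) hσ (fun i j _ => le_rfl)
    linarith
end

section
/- Let I be a real interval centered at 0 with [−1,1] ⊆ I and let f : Iⁿ → ℝ be a function such that the restriction of f to (I ∩ ℝ₊)ⁿ or to (I ∩ ℝ₋)ⁿ is nonconstant. Then the following are equivalent: (i) f is a symmetric quasi-Lovász extension and there exists A ⊆ [n] such that f_0(1_A) ≠ 0; (ii) f is comonotonically modular and f_0 is oddly homogeneous; (iii) there is a nondecreasing odd function φ_f : I → ℝ with φ_f(1) = 1 such that f = Ľ_{f|_{{0,1}ⁿ}} ∘ φ_f, where Ľ_{f|_{{0,1}ⁿ}} is the symmetric Lovász extension of the restriction of f to {0,1}ⁿ. -/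
open Finset

/-- `f : Iⁿ → ℝ` is a symmetric quasi-Lovász extension: `f = Ľ ∘ φ` for a symmetric Lovász
extension `Ľ` and a nondecreasing odd `φ : I → ℝ`. -/
def IsSymQLE {n : ℕ} (I : Set ℝ) (f : (Fin n → ℝ) → ℝ) : Prop :=
  ∃ ψ : Finset (Fin n) → ℝ, ∃ φ : ℝ → ℝ,
    MonotoneOn φ I ∧ (∀ x ∈ I, φ (-x) = -(φ x)) ∧
    ∀ x : Fin n → ℝ, (∀ i, x i ∈ I) → f x = SLov ψ (fun i => φ (x i))

namespace Stmt18Aux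
variable {n : ℕ}

lemma ind_empty : ind (∅ : Finset (Fin n)) = fun _ => 0 := by
  funext i; simp [ind]

lemma mobius_empty (ψ : Finset (Fin n) → ℝ) : mobius ψ ∅ = ψ ∅ := by
  simp [mobius]

lemma mobius_inv (ψ : Finset (Fin n) → ℝ) (S : Finset (Fin n)) :
    ∑ B ∈ S.powerset, mobius ψ B = ψ S := by
  unfold mobius
  rw [Finset.sum_comm' (t' := S.powerset)
    (s' := fun C => S.powerset.filter (fun B => C ⊆ B))]
  · have key : ∀ C ∈ S.powerset,
        (∑ B ∈ S.powerset.filter (fun B => C ⊆ B), (-1:ℝ) ^ (B.card - C.card) * ψ C)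
        = (if C = S then 1 else 0) * ψ C := by
      intro C hC
      rw [← Finset.sum_mul]
      congr 1
      rw [mem_powerset] at hC
      have : ∑ B ∈ S.powerset.filter (fun B => C ⊆ B), (-1:ℝ) ^ (B.card - C.card)
          = ∑ D ∈ (S \ C).powerset, (-1:ℝ) ^ D.card := by
        apply Finset.sum_nbij' (i := fun B => B \ C) (j := fun D => D ∪ C)
        · intro B hB; simp only [mem_filter, mem_powerset] at hB ⊢
          exact sdiff_subset_sdiff hB.1 le_rfl
        · intro D hD; simp only [mem_filter, mem_powerset] at hD ⊢
          exact ⟨union_subset (hD.trans sdiff_subset) hC, subset_union_right⟩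
        · intro B hB; simp only [mem_filter, mem_powerset] at hB
          rw [sdiff_union_of_subset hB.2]
        · intro D hD; simp only [mem_powerset] at hD
          rw [union_sdiff_right]
          exact sdiff_eq_self_of_disjoint (disjoint_left.mpr fun a ha => (mem_sdiff.mp (hD ha)).2)
        · intro B hB; simp only [mem_filter, mem_powerset] at hB
          rw [card_sdiff_of_subset hB.2]
      have cast : ∑ D ∈ (S \ C).powerset, (-1:ℝ) ^ D.card
          = ((∑ D ∈ (S \ C).powerset, (-1:ℤ) ^ D.card : ℤ) : ℝ) := by push_cast; rfl
      rw [this, cast, Finset.sum_powerset_neg_one_pow_card]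
      simp only [sdiff_eq_empty_iff_subset]
      by_cases h : C = S
      · simp [h]
      · rw [if_neg (fun hs => h (subset_antisymm hC hs)), if_neg h]
        simp
    rw [Finset.sum_congr rfl key]
    simp only [ite_mul, one_mul, zero_mul]
    rw [Finset.sum_ite_eq' S.powerset S ψ]
    simp
  · intro B C
    simp only [mem_powerset, mem_filter]
    constructor
    · rintro ⟨h1, h2⟩; exact ⟨⟨h1, h2⟩, h2.trans h1⟩
    · rintro ⟨⟨h1, h2⟩, _⟩; exact ⟨h1, h2⟩


lemma mem_Aup {σ : Equiv.Perm (Fin n)} {k : ℕ} {i : Fin n} :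
    i ∈ Aup σ k ↔ k ≤ (σ.symm i : ℕ) := by
  simp only [Aup, Finset.mem_image, Finset.mem_filter, Finset.mem_univ, true_and]
  constructor
  · rintro ⟨j, hj, rfl⟩; simpa using hj
  · intro h; exact ⟨σ.symm i, h, by simp⟩

lemma mem_Adown {σ : Equiv.Perm (Fin n)} {k : ℕ} {i : Fin n} :
    i ∈ Adown σ k ↔ (σ.symm i : ℕ) < k := by
  simp only [Adown, Finset.mem_image, Finset.mem_filter, Finset.mem_univ, true_and]
  constructor
  · rintro ⟨j, hj, rfl⟩; simpa using hj
  · intro h; exact ⟨σ.symm i, h, by simp⟩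

lemma Aup_succ (σ : Equiv.Perm (Fin n)) (k : Fin n) :
    Aup σ ((k:ℕ)+1) = (Aup σ (k:ℕ)).erase (σ k) := by
  ext i
  rw [Finset.mem_erase, mem_Aup, mem_Aup]
  constructor
  · intro h
    refine ⟨fun he => ?_, by omega⟩
    rw [he] at h; simp at h
  · rintro ⟨hne, hk⟩
    rcases Nat.lt_or_ge (k:ℕ) (σ.symm i : ℕ) with h | h
    · omega
    · exact absurd (by rw [← Fin.ext (le_antisymm h hk), Equiv.apply_symm_apply]) hne

lemma exists_sort (x : Fin n → ℝ) : ∃ σ : Equiv.Perm (Fin n), inRσ σ x := by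
  exact ⟨Tuple.sort x, fun i j hij => Tuple.monotone_sort x hij⟩

lemma sum_mobius_fiber (ψ : Finset (Fin n) → ℝ) (σ : Equiv.Perm (Fin n)) (k : Fin n) :
    ∑ A ∈ (Aup σ (k:ℕ)).powerset.filter (fun A => σ k ∈ A), mobius ψ A
      = ψ (Aup σ (k:ℕ)) - ψ (Aup σ ((k:ℕ)+1)) := by
  have h1 := Finset.sum_filter_add_sum_filter_not (Aup σ (k:ℕ)).powerset
    (fun A => σ k ∈ A) (mobius ψ)
  have h2 : (Aup σ (k:ℕ)).powerset.filter (fun A => ¬ σ k ∈ A)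
      = (Aup σ ((k:ℕ)+1)).powerset := by
    ext B
    simp only [Finset.mem_filter, Finset.mem_powerset, Aup_succ, Finset.subset_erase]
  rw [h2, mobius_inv, mobius_inv] at h1
  linarith

lemma Lov_sorted (ψ : Finset (Fin n) → ℝ) (σ : Equiv.Perm (Fin n)) (y : Fin n → ℝ)
    (hy : inRσ σ y) :
    Lov ψ y = mobius ψ ∅
      + ∑ k : Fin n, y (σ k) * (ψ (Aup σ (k:ℕ)) - ψ (Aup σ ((k:ℕ)+1))) := by
  rcases Nat.eq_zero_or_pos n with hn | hn
  · subst hn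
    have h0 : ∀ A ∈ (Finset.univ : Finset (Finset (Fin 0))),
        mobius ψ A * minOnFin A y = 0 := by
      intro A _
      have hA : A = ∅ := Finset.eq_empty_of_isEmpty A
      simp [hA, minOnFin]
    simp only [Lov, Finset.sum_eq_zero h0]
    have : ∑ k : Fin 0, y (σ k) * (ψ (Aup σ (k:ℕ)) - ψ (Aup σ ((k:ℕ)+1))) = 0 :=
      Finset.sum_of_isEmpty _
    rw [this]
  · have d : Fin n := ⟨0, hn⟩
    set g : Finset (Fin n) → Fin n :=
      fun A => if hA : A.Nonempty then (A.image σ.symm).min' (hA.image _) else d with hg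
    have hg1 : ∀ A : Finset (Fin n), A.Nonempty → σ (g A) ∈ A := by
      intro A hA
      have : g A ∈ A.image σ.symm := by
        rw [hg]; simp only [dif_pos hA]; exact Finset.min'_mem _ _
      rcases Finset.mem_image.mp this with ⟨a, ha, hae⟩
      rw [← hae]; simpa using ha
    have hg2 : ∀ A : Finset (Fin n), A.Nonempty → ∀ a ∈ A, g A ≤ σ.symm a := by
      intro A hA a ha
      rw [hg]; simp only [dif_pos hA]
      exact Finset.min'_le _ _ (Finset.mem_image_of_mem _ ha)
    have hmin : ∀ A : Finset (Fin n), A.Nonempty → minOnFin A y = y (σ (g A)) := by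
      intro A hA
      rw [minOnFin, dif_pos hA]
      apply le_antisymm
      · exact Finset.inf'_le _ (hg1 A hA)
      · apply Finset.le_inf'
        intro a ha
        have := hy (g A) (σ.symm a) (hg2 A hA a ha)
        simpa using this
    have hfib : ∀ A : Finset (Fin n), A.Nonempty → ∀ k : Fin n,
        (g A = k ↔ σ k ∈ A ∧ A ⊆ Aup σ (k:ℕ)) := by
      intro A hA k
      constructor
      · rintro rfl
        refine ⟨hg1 A hA, fun a ha => ?_⟩
        rw [mem_Aup]
        exact_mod_cast Fin.le_iff_val_le_val.mp (hg2 A hA a ha)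
      · rintro ⟨h1, h2⟩
        apply le_antisymm
        · have := hg2 A hA (σ k) h1
          simpa using this
        · rw [hg]; simp only [dif_pos hA]
          apply Finset.le_min'
          intro b hb
          rcases Finset.mem_image.mp hb with ⟨a, ha, rfl⟩
          have := mem_Aup.mp (h2 ha)
          exact Fin.le_iff_val_le_val.mpr this
    have step1 : ∑ A : Finset (Fin n), mobius ψ A * minOnFin A y
        = ∑ A ∈ Finset.univ.filter (fun A : Finset (Fin n) => A.Nonempty),
            mobius ψ A * minOnFin A y := by
      symm
      apply Finset.sum_filter_of_ne
      intro A _ hne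
      by_contra hA
      rw [Finset.not_nonempty_iff_eq_empty] at hA
      apply hne
      simp [hA, minOnFin]
    have step2 : ∑ A ∈ Finset.univ.filter (fun A : Finset (Fin n) => A.Nonempty),
          mobius ψ A * minOnFin A y
        = ∑ k : Fin n, ∑ A ∈ (Finset.univ.filter
            (fun A : Finset (Fin n) => A.Nonempty)).filter (fun A => g A = k),
            mobius ψ A * minOnFin A y := by
      symm
      exact Finset.sum_fiberwise_of_maps_to (fun A _ => Finset.mem_univ (g A)) _
    have step3 : ∀ k : Fin n,
        (Finset.univ.filter (fun A : Finset (Fin n) => A.Nonempty)).filter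
            (fun A => g A = k)
          = (Aup σ (k:ℕ)).powerset.filter (fun A => σ k ∈ A) := by
      intro k
      ext A
      simp only [Finset.mem_filter, Finset.mem_powerset, Finset.mem_univ, true_and]
      constructor
      · rintro ⟨hA, hgA⟩
        rcases (hfib A hA k).mp hgA with ⟨h1, h2⟩
        exact ⟨h2, h1⟩
      · rintro ⟨h2, h1⟩
        have hA : A.Nonempty := ⟨σ k, h1⟩
        exact ⟨hA, (hfib A hA k).mpr ⟨h1, h2⟩⟩
    have step4 : ∀ k : Fin n,
        ∑ A ∈ (Aup σ (k:ℕ)).powerset.filter (fun A => σ k ∈ A),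
            mobius ψ A * minOnFin A y
          = y (σ k) * (ψ (Aup σ (k:ℕ)) - ψ (Aup σ ((k:ℕ)+1))) := by
      intro k
      have : ∀ A ∈ (Aup σ (k:ℕ)).powerset.filter (fun A => σ k ∈ A),
          mobius ψ A * minOnFin A y = mobius ψ A * y (σ k) := by
        intro A hA
        simp only [Finset.mem_filter, Finset.mem_powerset] at hA
        have hAne : A.Nonempty := ⟨σ k, hA.2⟩
        rw [hmin A hAne, (hfib A hAne k).mpr ⟨hA.2, hA.1⟩]
      rw [Finset.sum_congr rfl this, ← Finset.sum_mul, sum_mobius_fiber ψ σ k,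
        mul_comm]
    rw [Lov, step1, step2]
    congr 1
    apply Finset.sum_congr rfl
    intro k _
    rw [step3 k, step4 k]

lemma Aup_rev (σ : Equiv.Perm (Fin n)) (k : ℕ) (hk : k ≤ n) :
    Aup (Fin.revPerm.trans σ) k = Adown σ (n - k) := by
  ext i
  rw [mem_Aup, mem_Adown]
  have hv : ((Fin.revPerm.trans σ).symm i : ℕ) = n - ((σ.symm i : ℕ) + 1) := by
    rw [Equiv.symm_trans_apply, Fin.revPerm_symm, Fin.revPerm_apply, Fin.val_rev]
  have hlt : (σ.symm i : ℕ) < n := (σ.symm i).is_lt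
  rw [hv]
  omega

lemma SLov_sorted (ψ : Finset (Fin n) → ℝ) (σ : Equiv.Perm (Fin n)) (y : Fin n → ℝ)
    (hy : inRσ σ y) :
    SLov ψ y = ψ ∅ + ∑ k : Fin n,
      (max (y (σ k)) 0 * (ψ (Aup σ (k:ℕ)) - ψ (Aup σ ((k:ℕ)+1)))
       - max (-(y (σ k))) 0 * (ψ (Adown σ ((k:ℕ)+1)) - ψ (Adown σ (k:ℕ)))) := by
  have hplus : inRσ σ (fun i => max (y i) 0) := fun i j h => max_le_max (hy i j h) le_rfl
  have hminus : inRσ (Fin.revPerm.trans σ) (fun i => max (-(y i)) 0) := by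
    intro i j hij
    simp only [Equiv.trans_apply, Fin.revPerm_apply]
    exact max_le_max (neg_le_neg (hy _ _ (Fin.rev_le_rev.mpr hij))) le_rfl
  rw [SLov, Lov_sorted ψ σ _ hplus, Lov_sorted ψ (Fin.revPerm.trans σ) _ hminus]
  have reind : ∑ k : Fin n, (max (-(y ((Fin.revPerm.trans σ) k))) 0)
        * (ψ (Aup (Fin.revPerm.trans σ) (k:ℕ)) - ψ (Aup (Fin.revPerm.trans σ) ((k:ℕ)+1)))
      = ∑ k : Fin n, max (-(y (σ k))) 0 * (ψ (Adown σ ((k:ℕ)+1)) - ψ (Adown σ (k:ℕ))) := by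
    apply Fintype.sum_equiv Fin.revPerm
    intro k
    have hk : (k:ℕ) < n := k.is_lt
    have hrev : ((Fin.rev k : Fin n) : ℕ) = n - ((k:ℕ) + 1) := Fin.val_rev k
    simp only [Equiv.trans_apply, Fin.revPerm_apply]
    rw [Aup_rev σ _ (by omega : (k:ℕ) ≤ n), Aup_rev σ _ (by omega : (k:ℕ)+1 ≤ n), hrev]
    have e3 : n - (k:ℕ) = n - ((k:ℕ)+1) + 1 := by omega
    rw [e3]
  rw [reind, Finset.sum_sub_distrib]
  ring

lemma minOn_smul_ind (c : ℝ) (hc : 0 ≤ c) (A B : Finset (Fin n)) :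
    minOnFin B (fun i => c * ind A i) = if B.Nonempty ∧ B ⊆ A then c else 0 := by
  by_cases hB : B.Nonempty
  · rw [minOnFin, dif_pos hB]
    by_cases hBA : B ⊆ A
    · rw [if_pos ⟨hB, hBA⟩]
      apply le_antisymm
      · obtain ⟨b, hb⟩ := hB
        exact le_trans (Finset.inf'_le _ hb) (by simp [ind, hBA hb])
      · apply Finset.le_inf'; intro b hb; simp [ind, hBA hb]
    · rw [if_neg (by tauto)]
      obtain ⟨b, hb, hbA⟩ := Finset.not_subset.mp hBA
      apply le_antisymm
      · exact le_trans (Finset.inf'_le _ hb) (by simp [ind, hbA])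
      · apply Finset.le_inf'; intro a _
        by_cases haA : a ∈ A <;> simp [ind, haA, hc]
  · rw [minOnFin, dif_neg hB, if_neg (by tauto)]

lemma Lov_smul_ind (ψ : Finset (Fin n) → ℝ) (c : ℝ) (hc : 0 ≤ c) (A : Finset (Fin n)) :
    Lov ψ (fun i => c * ind A i) = ψ ∅ + c * (ψ A - ψ ∅) := by
  rw [Lov, mobius_empty]
  congr 1
  have h1 : ∀ B : Finset (Fin n), mobius ψ B * minOnFin B (fun i => c * ind A i)
      = if B.Nonempty ∧ B ⊆ A then mobius ψ B * c else 0 := by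
    intro B; rw [minOn_smul_ind c hc]; split_ifs <;> simp
  rw [Finset.sum_congr rfl (fun B _ => h1 B), ← Finset.sum_filter]
  have hset : Finset.univ.filter (fun B : Finset (Fin n) => B.Nonempty ∧ B ⊆ A)
      = A.powerset.erase ∅ := by
    ext B
    simp only [Finset.mem_filter, Finset.mem_univ, true_and, Finset.mem_erase,
      Finset.mem_powerset, Finset.nonempty_iff_ne_empty]
    try tauto
  rw [hset, ← Finset.sum_mul, Finset.sum_erase_eq_sub (Finset.empty_mem_powerset A),
    mobius_inv, mobius_empty]
  ring

lemma Lov_zero (ψ : Finset (Fin n) → ℝ) : Lov ψ (fun _ => (0:ℝ)) = ψ ∅ := by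
  have h0 : ∀ B ∈ (Finset.univ : Finset (Finset (Fin n))),
      mobius ψ B * minOnFin B (fun _ => (0:ℝ)) = 0 := by
    intro B _
    by_cases hB : B.Nonempty
    · rw [minOnFin, dif_pos hB, Finset.inf'_const]; ring
    · rw [minOnFin, dif_neg hB]; ring
  rw [Lov, mobius_empty, Finset.sum_eq_zero h0, add_zero]

lemma SLov_smul_ind (ψ : Finset (Fin n) → ℝ) (c : ℝ) (A : Finset (Fin n)) :
    SLov ψ (fun i => c * ind A i) = ψ ∅ + c * (ψ A - ψ ∅) := by
  have hind : ∀ i, (0:ℝ) ≤ ind A i := by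
    intro i; unfold ind; split_ifs <;> norm_num
  rcases le_or_gt 0 c with hc | hc
  · have e1 : (fun i => max (c * ind A i) 0) = fun i => c * ind A i := by
      funext i; exact max_eq_left (mul_nonneg hc (hind i))
    have e2 : (fun i => max (-(c * ind A i)) 0) = fun _ => (0:ℝ) := by
      funext i; exact max_eq_right (by nlinarith [hind i])
    rw [SLov, e1, e2, Lov_smul_ind ψ c hc A, Lov_zero]; ring
  · have e1 : (fun i => max (c * ind A i) 0) = fun _ => (0:ℝ) := by
      funext i
      apply max_eq_right
      by_cases h : i ∈ A <;> simp [ind, h] <;> linarith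
    have e2 : (fun i => max (-(c * ind A i)) 0) = fun i => (-c) * ind A i := by
      funext i; rw [← neg_mul]; exact max_eq_left (mul_nonneg (by linarith) (hind i))
    rw [SLov, e1, e2, Lov_smul_ind ψ (-c) (by linarith) A, Lov_zero]; ring

lemma SLov_ind (ψ : Finset (Fin n) → ℝ) (A : Finset (Fin n)) :
    SLov ψ (ind A) = ψ A := by
  have : ind A = fun i => (1:ℝ) * ind A i := by funext i; rw [one_mul]
  rw [this, SLov_smul_ind]; ring

lemma Dpos {I : Set ℝ} (f : (Fin n → ℝ) → ℝ) (hm : ComonModular I f) (h0 : (0:ℝ) ∈ I)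
    (σ : Equiv.Perm (Fin n)) (x : Fin n → ℝ) (hx : ∀ i, x i ∈ I) (hs : inRσ σ x)
    (hpos : ∀ i, 0 ≤ x i) :
    f x = f (fun _ => 0) + ∑ k : Fin n,
      (f (fun i => x (σ k) * ind (Aup σ (k:ℕ)) i)
       - f (fun i => x (σ k) * ind (Aup σ ((k:ℕ)+1)) i)) := by
  set u : ℕ → (Fin n → ℝ) := fun k i => if k ≤ (σ.symm i : ℕ) then x i else 0 with hu
  have hu0 : u 0 = x := by funext i; simp [hu]
  have hun : u n = fun _ => 0 := by
    funext i; exact if_neg (by exact Nat.not_le.mpr (σ.symm i).is_lt)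
  have hind : ∀ (k:ℕ) (c : ℝ), (fun i => c * ind (Aup σ k) i)
      = fun i => if k ≤ (σ.symm i : ℕ) then c else 0 := by
    intro k c; funext i; by_cases h : i ∈ Aup σ k
    · rw [ind, if_pos h, mul_one, if_pos (mem_Aup.mp h)]
    · rw [ind, if_neg h, mul_zero, if_neg (fun hh => h (mem_Aup.mpr hh))]
  have hxval : ∀ (k i : Fin n), (k:ℕ) ≤ (σ.symm i : ℕ) → x (σ k) ≤ x i := by
    intro k i h
    have := hs k (σ.symm i) (by rwa [Fin.le_def])
    rwa [Equiv.apply_symm_apply] at this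
  have step : ∀ k : Fin n, f (u (k:ℕ)) = f (u ((k:ℕ)+1))
      + f (fun i => x (σ k) * ind (Aup σ (k:ℕ)) i)
      - f (fun i => x (σ k) * ind (Aup σ ((k:ℕ)+1)) i) := by
    intro k
    have key := hm σ (u ((k:ℕ)+1)) (fun i => x (σ k) * ind (Aup σ (k:ℕ)) i)
      (by intro i; simp only [hu]; split_ifs; exacts [hx i, h0])
      (by intro i; show (fun i => x (σ k) * ind (Aup σ (k:ℕ)) i) i ∈ I; rw [hind]; dsimp only; split_ifs; exacts [hx (σ k), h0])
      (by intro i j hij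
          simp only [hu, Equiv.symm_apply_apply]
          have hvij : (i:ℕ) ≤ (j:ℕ) := hij
          by_cases h1 : (k:ℕ)+1 ≤ (i:ℕ) <;> by_cases h2 : (k:ℕ)+1 ≤ (j:ℕ)
          · rw [if_pos h1, if_pos h2]; exact hs i j hij
          · omega
          · rw [if_neg h1, if_pos h2]; exact hpos (σ j)
          · rw [if_neg h1, if_neg h2])
      (by intro i j hij
          rw [hind]
          dsimp only
          simp only [Equiv.symm_apply_apply]
          have hvij : (i:ℕ) ≤ (j:ℕ) := hij
          by_cases h1 : (k:ℕ) ≤ (i:ℕ) <;> by_cases h2 : (k:ℕ) ≤ (j:ℕ)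
          · rw [if_pos h1, if_pos h2]
          · omega
          · rw [if_neg h1, if_pos h2]; exact hpos (σ k)
          · rw [if_neg h1, if_neg h2])
    have hmin : (fun i => min (u ((k:ℕ)+1) i) (x (σ k) * ind (Aup σ (k:ℕ)) i))
        = fun i => x (σ k) * ind (Aup σ ((k:ℕ)+1)) i := by
      funext i
      have e1 := congrFun (hind ((k:ℕ)) (x (σ k))) i
      have e2 := congrFun (hind ((k:ℕ)+1) (x (σ k))) i
      skip
      rw [e1, e2]
      simp only [hu]
      by_cases h2 : (k:ℕ)+1 ≤ (σ.symm i : ℕ)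
      · rw [if_pos h2, if_pos (by omega : (k:ℕ) ≤ (σ.symm i:ℕ)), if_pos h2]
        exact min_eq_right (hxval k i (by omega))
      · rw [if_neg h2, if_neg h2]
        by_cases h1 : (k:ℕ) ≤ (σ.symm i : ℕ)
        · rw [if_pos h1]; exact min_eq_left (hpos (σ k))
        · rw [if_neg h1]; exact min_self 0
    have hmax : (fun i => max (u ((k:ℕ)+1) i) (x (σ k) * ind (Aup σ (k:ℕ)) i))
        = u (k:ℕ) := by
      funext i
      have e1 := congrFun (hind ((k:ℕ)) (x (σ k))) i
      skip
      rw [e1]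
      simp only [hu]
      by_cases h2 : (k:ℕ)+1 ≤ (σ.symm i : ℕ)
      · rw [if_pos h2, if_pos (by omega : (k:ℕ) ≤ (σ.symm i:ℕ)),
          if_pos (by omega : (k:ℕ) ≤ (σ.symm i:ℕ))]
        exact max_eq_left (hxval k i (by omega))
      · rw [if_neg h2]
        by_cases h1 : (k:ℕ) ≤ (σ.symm i : ℕ)
        · rw [if_pos h1, if_pos h1]
          have hik : i = σ k := by
            rw [← Equiv.apply_symm_apply σ i]
            congr 1
            exact Fin.ext (by omega)
          rw [hik, max_eq_right (hpos (σ k))]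
        · rw [if_neg h1, if_neg h1]; exact max_eq_left le_rfl
    rw [hmin, hmax] at key
    linarith
  have tele : ∀ m : ℕ, m ≤ n → f (u (n - m)) = f (fun _ => 0)
      + ∑ k ∈ Finset.univ.filter (fun k : Fin n => n - m ≤ (k:ℕ)),
        (f (fun i => x (σ k) * ind (Aup σ (k:ℕ)) i)
         - f (fun i => x (σ k) * ind (Aup σ ((k:ℕ)+1)) i)) := by
    intro m
    induction m with
    | zero =>
      intro _
      have hfil : Finset.univ.filter (fun k : Fin n => n ≤ (k:ℕ)) = ∅ := by
        ext k
        simp only [Finset.mem_filter, Finset.mem_univ, true_and, Finset.notMem_empty,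
          iff_false]
        have := k.is_lt; omega
      rw [Nat.sub_zero, hun, hfil, Finset.sum_empty, add_zero]
    | succ m ih =>
      intro hm1
      have hmn : m ≤ n := by omega
      have hk0lt : n - (m+1) < n := by omega
      set k0 : Fin n := ⟨n - (m+1), hk0lt⟩ with hk0def
      have hk0 : (k0:ℕ) = n - (m+1) := rfl
      have hstep := step k0
      have e1 : (k0:ℕ)+1 = n - m := by omega
      rw [hk0] at hstep
      rw [show u ((k0:ℕ)+1) = u (n - m) by rw [e1]] at hstep
      rw [ih hmn] at hstep
      have hins : Finset.univ.filter (fun k : Fin n => n - (m+1) ≤ (k:ℕ))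
          = insert k0 (Finset.univ.filter (fun k : Fin n => n - m ≤ (k:ℕ))) := by
        ext k
        simp only [Finset.mem_filter, Finset.mem_univ, true_and, Finset.mem_insert,
          Fin.ext_iff, hk0]
        have := k.is_lt; omega
      have hnot : k0 ∉ Finset.univ.filter (fun k : Fin n => n - m ≤ (k:ℕ)) := by
        simp only [Finset.mem_filter, Finset.mem_univ, true_and, hk0]
        omega
      rw [hins, Finset.sum_insert hnot, hstep]
      ring
  have final := tele n le_rfl
  rw [Nat.sub_self, hu0] at final
  rw [final]
  congr 1
  apply Finset.sum_congr _ (fun _ _ => rfl)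
  rw [Finset.filter_true_of_mem (fun k _ => Nat.zero_le _)]

lemma Dneg {I : Set ℝ} (f : (Fin n → ℝ) → ℝ) (hm : ComonModular I f) (h0 : (0:ℝ) ∈ I)
    (σ : Equiv.Perm (Fin n)) (x : Fin n → ℝ) (hx : ∀ i, x i ∈ I) (hs : inRσ σ x)
    (hneg : ∀ i, x i ≤ 0) :
    f x = f (fun _ => 0) + ∑ k : Fin n,
      (f (fun i => x (σ k) * ind (Adown σ ((k:ℕ)+1)) i)
       - f (fun i => x (σ k) * ind (Adown σ (k:ℕ)) i)) := by
  set u : ℕ → (Fin n → ℝ) := fun k i => if (σ.symm i : ℕ) < k then x i else 0 with hu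
  have hu0 : u 0 = fun _ => 0 := by funext i; simp [hu]
  have hun : u n = x := by
    funext i; exact if_pos (σ.symm i).is_lt
  have hind : ∀ (k:ℕ) (c : ℝ), (fun i => c * ind (Adown σ k) i)
      = fun i => if (σ.symm i : ℕ) < k then c else 0 := by
    intro k c; funext i; by_cases h : i ∈ Adown σ k
    · rw [ind, if_pos h, mul_one, if_pos (mem_Adown.mp h)]
    · rw [ind, if_neg h, mul_zero, if_neg (fun hh => h (mem_Adown.mpr hh))]
  have hxval : ∀ (k i : Fin n), (σ.symm i : ℕ) ≤ (k:ℕ) → x i ≤ x (σ k) := by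
    intro k i h
    have := hs (σ.symm i) k (by rwa [Fin.le_def])
    rwa [Equiv.apply_symm_apply] at this
  have step : ∀ k : Fin n, f (u ((k:ℕ)+1)) = f (u (k:ℕ))
      + f (fun i => x (σ k) * ind (Adown σ ((k:ℕ)+1)) i)
      - f (fun i => x (σ k) * ind (Adown σ (k:ℕ)) i) := by
    intro k
    have key := hm σ (u (k:ℕ)) (fun i => x (σ k) * ind (Adown σ ((k:ℕ)+1)) i)
      (by intro i; simp only [hu]; split_ifs; exacts [hx i, h0])
      (by intro i; show (fun i => x (σ k) * ind (Adown σ ((k:ℕ)+1)) i) i ∈ I; rw [hind]; dsimp only; split_ifs; exacts [hx (σ k), h0])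
      (by intro i j hij
          simp only [hu, Equiv.symm_apply_apply]
          have hvij : (i:ℕ) ≤ (j:ℕ) := hij
          by_cases h1 : (i:ℕ) < (k:ℕ) <;> by_cases h2 : (j:ℕ) < (k:ℕ)
          · rw [if_pos h1, if_pos h2]; exact hs i j hij
          · rw [if_pos h1, if_neg h2]; exact hneg (σ i)
          · omega
          · rw [if_neg h1, if_neg h2])
      (by intro i j hij
          rw [hind]
          dsimp only
          simp only [Equiv.symm_apply_apply]
          have hvij : (i:ℕ) ≤ (j:ℕ) := hij
          by_cases h1 : (i:ℕ) < (k:ℕ)+1 <;> by_cases h2 : (j:ℕ) < (k:ℕ)+1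
          · rw [if_pos h1, if_pos h2]
          · rw [if_pos h1, if_neg h2]; exact hneg (σ k)
          · omega
          · rw [if_neg h1, if_neg h2])
    have hmin : (fun i => min (u (k:ℕ) i) (x (σ k) * ind (Adown σ ((k:ℕ)+1)) i))
        = u ((k:ℕ)+1) := by
      funext i
      have e1 := congrFun (hind ((k:ℕ)+1) (x (σ k))) i
      rw [e1]
      simp only [hu]
      by_cases h1 : (σ.symm i : ℕ) < (k:ℕ)
      · rw [if_pos h1, if_pos (by omega : (σ.symm i:ℕ) < (k:ℕ)+1),
          if_pos (by omega : (σ.symm i:ℕ) < (k:ℕ)+1)]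
        exact min_eq_left (hxval k i (by omega))
      · rw [if_neg h1]
        by_cases h2 : (σ.symm i : ℕ) < (k:ℕ)+1
        · rw [if_pos h2, if_pos h2]
          have hik : i = σ k := by
            rw [← Equiv.apply_symm_apply σ i]
            congr 1
            exact Fin.ext (by omega)
          rw [hik, min_eq_right (hneg (σ k))]
        · rw [if_neg h2, if_neg h2]; exact min_self 0
    have hmax : (fun i => max (u (k:ℕ) i) (x (σ k) * ind (Adown σ ((k:ℕ)+1)) i))
        = fun i => x (σ k) * ind (Adown σ (k:ℕ)) i := by
      funext i
      have e1 := congrFun (hind ((k:ℕ)+1) (x (σ k))) i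
      have e2 := congrFun (hind ((k:ℕ)) (x (σ k))) i
      rw [e1, e2]
      simp only [hu]
      by_cases h1 : (σ.symm i : ℕ) < (k:ℕ)
      · rw [if_pos h1, if_pos (by omega : (σ.symm i:ℕ) < (k:ℕ)+1), if_pos h1]
        exact max_eq_right (hxval k i (by omega))
      · rw [if_neg h1, if_neg h1]
        by_cases h2 : (σ.symm i : ℕ) < (k:ℕ)+1
        · rw [if_pos h2]; exact max_eq_left (hneg (σ k))
        · rw [if_neg h2]; exact max_self 0
    rw [hmin, hmax] at key
    linarith
  have tele : ∀ m : ℕ, m ≤ n → f (u m) = f (fun _ => 0)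
      + ∑ k ∈ Finset.univ.filter (fun k : Fin n => (k:ℕ) < m),
        (f (fun i => x (σ k) * ind (Adown σ ((k:ℕ)+1)) i)
         - f (fun i => x (σ k) * ind (Adown σ (k:ℕ)) i)) := by
    intro m
    induction m with
    | zero =>
      intro _
      have hfil : Finset.univ.filter (fun k : Fin n => (k:ℕ) < 0) = ∅ := by
        ext k
        simp only [Finset.mem_filter, Finset.mem_univ, true_and, Finset.notMem_empty,
          iff_false]
        omega
      rw [hu0, hfil, Finset.sum_empty, add_zero]
    | succ m ih =>
      intro hm1
      have hmn : m ≤ n := by omega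
      have hk0lt : m < n := by omega
      set k0 : Fin n := ⟨m, hk0lt⟩ with hk0def
      have hk0 : (k0:ℕ) = m := rfl
      have hstep := step k0
      rw [hk0] at hstep
      rw [ih hmn] at hstep
      have hins : Finset.univ.filter (fun k : Fin n => (k:ℕ) < m+1)
          = insert k0 (Finset.univ.filter (fun k : Fin n => (k:ℕ) < m)) := by
        ext k
        simp only [Finset.mem_filter, Finset.mem_univ, true_and, Finset.mem_insert,
          Fin.ext_iff, hk0]
        omega
      have hnot : k0 ∉ Finset.univ.filter (fun k : Fin n => (k:ℕ) < m) := by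
        simp only [Finset.mem_filter, Finset.mem_univ, true_and, hk0]
        omega
      rw [hins, Finset.sum_insert hnot, hstep]
      ring
  have final := tele n le_rfl
  rw [hun] at final
  rw [final]
  congr 1
  apply Finset.sum_congr _ (fun _ _ => rfl)
  rw [Finset.filter_true_of_mem (fun k _ => k.is_lt)]

lemma master {I : Set ℝ} (f : (Fin n → ℝ) → ℝ) (hm : ComonModular I f) (h0 : (0:ℝ) ∈ I)
    (σ : Equiv.Perm (Fin n)) (x : Fin n → ℝ) (hx : ∀ i, x i ∈ I) (hs : inRσ σ x) :
    f x = f (fun _ => 0) + ∑ k : Fin n,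
      ((f (fun i => max (x (σ k)) 0 * ind (Aup σ (k:ℕ)) i)
        - f (fun i => max (x (σ k)) 0 * ind (Aup σ ((k:ℕ)+1)) i))
       + (f (fun i => min (x (σ k)) 0 * ind (Adown σ ((k:ℕ)+1)) i)
          - f (fun i => min (x (σ k)) 0 * ind (Adown σ (k:ℕ)) i))) := by
  have split := hm σ x (fun _ => 0) hx (fun _ => h0) hs (fun i j _ => le_rfl)
  have hxp : ∀ i, max (x i) 0 ∈ I := by
    intro i; rcases le_total (x i) 0 with h | h
    · rw [max_eq_right h]; exact h0
    · rw [max_eq_left h]; exact hx i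
  have hxm : ∀ i, min (x i) 0 ∈ I := by
    intro i; rcases le_total (x i) 0 with h | h
    · rw [min_eq_left h]; exact hx i
    · rw [min_eq_right h]; exact h0
  have hp := Dpos f hm h0 σ (fun i => max (x i) 0) hxp
    (fun i j hij => max_le_max (hs i j hij) le_rfl) (fun i => le_max_right _ _)
  have hq := Dneg f hm h0 σ (fun i => min (x i) 0) hxm
    (fun i j hij => min_le_min (hs i j hij) le_rfl) (fun i => min_le_right _ _)
  rw [Finset.sum_add_distrib]
  linarith
lemma nonconst {I : Set ℝ} (f : (Fin n → ℝ) → ℝ)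
    (hnc : (∃ x y : Fin n → ℝ, (∀ i, x i ∈ I ∩ Set.Ici (0 : ℝ)) ∧
              (∀ i, y i ∈ I ∩ Set.Ici (0 : ℝ)) ∧ f x ≠ f y) ∨
           (∃ x y : Fin n → ℝ, (∀ i, x i ∈ I ∩ Set.Iic (0 : ℝ)) ∧
              (∀ i, y i ∈ I ∩ Set.Iic (0 : ℝ)) ∧ f x ≠ f y))
    (hconst : ∀ x : Fin n → ℝ, (∀ i, x i ∈ I) → f x = f (fun _ => 0)) : False := by
  rcases hnc with ⟨x, y, hx, hy, hne⟩ | ⟨x, y, hx, hy, hne⟩ <;>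
    exact hne ((hconst x (fun i => (hx i).1)).trans (hconst y (fun i => (hy i).1)).symm)

lemma indI {I : Set ℝ} (h0 : (0:ℝ) ∈ I) (h1 : (1:ℝ) ∈ I) (A : Finset (Fin n)) :
    ∀ i, ind A i ∈ I := by
  intro i; unfold ind; split_ifs; exacts [h1, h0]

lemma imp13 {I : Set ℝ} (f : (Fin n → ℝ) → ℝ) (h0 : (0:ℝ) ∈ I) (h1 : (1:ℝ) ∈ I)
    (hQ : IsSymQLE I f) (hA : ∃ A : Finset (Fin n), f (ind A) - f (fun _ => 0) ≠ 0) :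
    ∃ φf : ℝ → ℝ, MonotoneOn φf I ∧ (∀ x ∈ I, φf (-x) = -(φf x)) ∧ φf 1 = 1 ∧
      ∀ x : Fin n → ℝ, (∀ i, x i ∈ I) →
        f x = SLov (fun A => f (ind A)) (fun i => φf (x i)) := by
  obtain ⟨ψ, φ, hmono, hodd, hf⟩ := hQ
  obtain ⟨A0, hA0⟩ := hA
  have hφ0 : φ 0 = 0 := by have := hodd 0 h0; simp at this; linarith
  have hfind : ∀ A : Finset (Fin n), f (ind A) = ψ ∅ + φ 1 * (ψ A - ψ ∅) := by
    intro A
    rw [hf (ind A) (indI h0 h1 A)]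
    have he : (fun i => φ (ind A i)) = fun i => φ 1 * ind A i := by
      funext i; unfold ind; split_ifs
      · rw [mul_one]
      · rw [mul_zero, hφ0]
    rw [he, SLov_smul_ind]
  have hf0 : f (fun _ => 0) = ψ ∅ := by
    rw [hf (fun _ => 0) (fun _ => h0)]
    have he : (fun i : Fin n => φ ((fun _ : Fin n => (0:ℝ)) i))
        = fun i => (0:ℝ) * ind (∅ : Finset (Fin n)) i := by
      funext i; dsimp only; rw [hφ0, zero_mul]
    rw [he, SLov_smul_ind]; ring
  have hc0 : φ 1 ≠ 0 := by
    intro hc; apply hA0; rw [hfind A0, hf0, hc]; ring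
  have hcpos : 0 < φ 1 := by
    have h01 : φ 0 ≤ φ 1 := hmono h0 h1 (by norm_num)
    rw [hφ0] at h01
    exact lt_of_le_of_ne h01 (Ne.symm hc0)
  refine ⟨fun t => φ t / φ 1, ?_, ?_, div_self hc0, ?_⟩
  · intro a ha b hb hab
    exact (div_le_div_iff_of_pos_right hcpos).mpr (hmono ha hb hab)
  · intro t ht; dsimp only; rw [hodd t ht, neg_div]
  · intro x hx
    obtain ⟨σ, hσ⟩ := exists_sort (fun i => φ (x i))
    have hσ2 : inRσ σ (fun i => φ (x i) / φ 1) := by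
      intro i j hij
      exact (div_le_div_iff_of_pos_right hcpos).mpr (hσ i j hij)
    rw [hf x hx, SLov_sorted ψ σ _ hσ, SLov_sorted (fun A => f (ind A)) σ _ hσ2]
    rw [show f (ind (∅ : Finset (Fin n))) = ψ ∅ by rw [hfind]; ring]
    congr 1
    apply Finset.sum_congr rfl
    intro k _
    rw [hfind (Aup σ (k:ℕ)), hfind (Aup σ ((k:ℕ)+1)), hfind (Adown σ ((k:ℕ)+1)),
      hfind (Adown σ (k:ℕ))]
    have hmx : max (φ (x (σ k)) / φ 1) 0 = max (φ (x (σ k))) 0 / φ 1 := by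
      rw [← max_div_div_right (le_of_lt hcpos), zero_div]
    have hmx2 : max (-(φ (x (σ k)) / φ 1)) 0 = max (-(φ (x (σ k)))) 0 / φ 1 := by
      rw [← neg_div, ← max_div_div_right (le_of_lt hcpos), zero_div]
    rw [hmx, hmx2]
    field_simp
    ring

lemma imp31 {I : Set ℝ} (f : (Fin n → ℝ) → ℝ)
    (hnc : (∃ x y : Fin n → ℝ, (∀ i, x i ∈ I ∩ Set.Ici (0 : ℝ)) ∧
              (∀ i, y i ∈ I ∩ Set.Ici (0 : ℝ)) ∧ f x ≠ f y) ∨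
           (∃ x y : Fin n → ℝ, (∀ i, x i ∈ I ∩ Set.Iic (0 : ℝ)) ∧
              (∀ i, y i ∈ I ∩ Set.Iic (0 : ℝ)) ∧ f x ≠ f y))
    (hP3 : ∃ φf : ℝ → ℝ, MonotoneOn φf I ∧ (∀ x ∈ I, φf (-x) = -(φf x)) ∧ φf 1 = 1 ∧
      ∀ x : Fin n → ℝ, (∀ i, x i ∈ I) →
        f x = SLov (fun A => f (ind A)) (fun i => φf (x i))) :
    IsSymQLE I f ∧ ∃ A : Finset (Fin n), f (ind A) - f (fun _ => 0) ≠ 0 := by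
  obtain ⟨φf, hmono, hodd, h1f, hf⟩ := hP3
  refine ⟨⟨fun A => f (ind A), φf, hmono, hodd, hf⟩, ?_⟩
  by_contra hno
  push_neg at hno
  apply nonconst f hnc
  intro x hx
  obtain ⟨σ, hσ⟩ := exists_sort (fun i => φf (x i))
  rw [hf x hx, SLov_sorted (fun A => f (ind A)) σ _ hσ]
  have hcA : ∀ A : Finset (Fin n), f (ind A) = f (fun _ => 0) := by
    intro A; have := hno A; linarith [sub_eq_zero.mp this]
  simp only [hcA, sub_self, mul_zero, zero_sub, neg_zero, add_zero, Finset.sum_const_zero]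

lemma pairsum (a b c d : Fin n → ℝ) :
    (∑ k : Fin n, (max (min (a k) (b k)) 0 * c k - max (-(min (a k) (b k))) 0 * d k))
    + ∑ k : Fin n, (max (max (a k) (b k)) 0 * c k - max (-(max (a k) (b k))) 0 * d k)
    = (∑ k : Fin n, (max (a k) 0 * c k - max (-(a k)) 0 * d k))
      + ∑ k : Fin n, (max (b k) 0 * c k - max (-(b k)) 0 * d k) := by
  rw [← Finset.sum_add_distrib, ← Finset.sum_add_distrib]
  apply Finset.sum_congr rfl
  intro k _
  rcases le_total (a k) (b k) with h | h
  · rw [min_eq_left h, max_eq_right h]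
  · rw [min_eq_right h, max_eq_left h]; ring

lemma imp32 {I : Set ℝ} (f : (Fin n → ℝ) → ℝ) (h0 : (0:ℝ) ∈ I) (h1 : (1:ℝ) ∈ I)
    (hP3 : ∃ φf : ℝ → ℝ, MonotoneOn φf I ∧ (∀ x ∈ I, φf (-x) = -(φf x)) ∧ φf 1 = 1 ∧
      ∀ x : Fin n → ℝ, (∀ i, x i ∈ I) →
        f x = SLov (fun A => f (ind A)) (fun i => φf (x i))) :
    ComonModular I f ∧ OddlyHom I (fun y => f y - f (fun _ => 0)) := by
  obtain ⟨φf, hmono, hodd, h1f, hf⟩ := hP3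
  have hφ0 : φf 0 = 0 := by have := hodd 0 h0; simp at this; linarith
  constructor
  · intro σ x y hx hy hsx hsy
    have hminI : ∀ i, min (x i) (y i) ∈ I := by
      intro i; rcases le_total (x i) (y i) with h | h
      · rw [min_eq_left h]; exact hx i
      · rw [min_eq_right h]; exact hy i
    have hmaxI : ∀ i, max (x i) (y i) ∈ I := by
      intro i; rcases le_total (x i) (y i) with h | h
      · rw [max_eq_right h]; exact hy i
      · rw [max_eq_left h]; exact hx i
    rw [hf x hx, hf y hy, hf _ hminI, hf _ hmaxI]
    have hminc : (fun i => φf (min (x i) (y i)))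
        = fun i => min (φf (x i)) (φf (y i)) := by
      funext i; rcases le_total (x i) (y i) with h | h
      · rw [min_eq_left h, min_eq_left (hmono (hx i) (hy i) h)]
      · rw [min_eq_right h, min_eq_right (hmono (hy i) (hx i) h)]
    have hmaxc : (fun i => φf (max (x i) (y i)))
        = fun i => max (φf (x i)) (φf (y i)) := by
      funext i; rcases le_total (x i) (y i) with h | h
      · rw [max_eq_right h, max_eq_right (hmono (hx i) (hy i) h)]
      · rw [max_eq_left h, max_eq_left (hmono (hy i) (hx i) h)]
    rw [hminc, hmaxc]
    have hsu : inRσ σ (fun i => φf (x i)) := fun i j hij => hmono (hx _) (hx _) (hsx i j hij)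
    have hsv : inRσ σ (fun i => φf (y i)) := fun i j hij => hmono (hy _) (hy _) (hsy i j hij)
    have hsmin : inRσ σ (fun i => min (φf (x i)) (φf (y i))) :=
      fun i j hij => min_le_min (hsu i j hij) (hsv i j hij)
    have hsmax : inRσ σ (fun i => max (φf (x i)) (φf (y i))) :=
      fun i j hij => max_le_max (hsu i j hij) (hsv i j hij)
    rw [SLov_sorted (fun A => f (ind A)) σ _ hsu, SLov_sorted (fun A => f (ind A)) σ _ hsv,
      SLov_sorted (fun A => f (ind A)) σ _ hsmin, SLov_sorted (fun A => f (ind A)) σ _ hsmax]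
    have key := pairsum (fun k => φf (x (σ k))) (fun k => φf (y (σ k)))
      (fun k => f (ind (Aup σ (k:ℕ))) - f (ind (Aup σ ((k:ℕ)+1))))
      (fun k => f (ind (Adown σ ((k:ℕ)+1))) - f (ind (Adown σ (k:ℕ))))
    linarith [key]
  · refine ⟨φf, hmono, hodd, ?_⟩
    intro t ht A
    have hif : ∀ i, t * ind A i ∈ I := by
      intro i; unfold ind; split_ifs
      · rw [mul_one]; exact ht
      · rw [mul_zero]; exact h0
    have hfa : f (fun i => t * ind A i) = f (ind ∅) + φf t * (f (ind A) - f (ind ∅)) := by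
      rw [hf _ hif]
      have he : (fun i => φf (t * ind A i)) = fun i => φf t * ind A i := by
        funext i; unfold ind; split_ifs
        · rw [mul_one, mul_one]
        · rw [mul_zero, mul_zero, hφ0]
      rw [he, SLov_smul_ind]
    have hfe : f (fun _ => 0) = f (ind ∅) := by
      rw [show (fun _ : Fin n => (0:ℝ)) = ind (∅ : Finset (Fin n)) from ind_empty.symm]
    dsimp only
    rw [hfa, hfe]
    ring

lemma imp23 {I : Set ℝ} (f : (Fin n → ℝ) → ℝ) (h0 : (0:ℝ) ∈ I) (h1 : (1:ℝ) ∈ I)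
    (hnc : (∃ x y : Fin n → ℝ, (∀ i, x i ∈ I ∩ Set.Ici (0 : ℝ)) ∧
              (∀ i, y i ∈ I ∩ Set.Ici (0 : ℝ)) ∧ f x ≠ f y) ∨
           (∃ x y : Fin n → ℝ, (∀ i, x i ∈ I ∩ Set.Iic (0 : ℝ)) ∧
              (∀ i, y i ∈ I ∩ Set.Iic (0 : ℝ)) ∧ f x ≠ f y))
    (hm : ComonModular I f) (hoh : OddlyHom I (fun y => f y - f (fun _ => 0))) :
    ∃ φf : ℝ → ℝ, MonotoneOn φf I ∧ (∀ x ∈ I, φf (-x) = -(φf x)) ∧ φf 1 = 1 ∧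
      ∀ x : Fin n → ℝ, (∀ i, x i ∈ I) →
        f x = SLov (fun A => f (ind A)) (fun i => φf (x i)) := by
  obtain ⟨χ, hχm, hχo, hχh⟩ := hoh
  have hχ0 : χ 0 = 0 := by have := hχo 0 h0; simp at this; linarith
  dsimp only at hχh
  have masterχ : ∀ x : Fin n → ℝ, (∀ i, x i ∈ I) → ∀ σ : Equiv.Perm (Fin n), inRσ σ x →
      f x = f (fun _ => 0) + ∑ k : Fin n,
        (χ (max (x (σ k)) 0) * ((f (ind (Aup σ (k:ℕ))) - f (fun _ => 0))
            - (f (ind (Aup σ ((k:ℕ)+1))) - f (fun _ => 0)))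
         + χ (min (x (σ k)) 0) * ((f (ind (Adown σ ((k:ℕ)+1))) - f (fun _ => 0))
            - (f (ind (Adown σ (k:ℕ))) - f (fun _ => 0)))) := by
    intro x hx σ hs
    rw [master f hm h0 σ x hx hs]
    congr 1
    apply Finset.sum_congr rfl
    intro k _
    have hmaxI : max (x (σ k)) 0 ∈ I := by
      rcases le_total (x (σ k)) 0 with h | h
      · rw [max_eq_right h]; exact h0
      · rw [max_eq_left h]; exact hx (σ k)
    have hminI : min (x (σ k)) 0 ∈ I := by
      rcases le_total (x (σ k)) 0 with h | h
      · rw [min_eq_left h]; exact hx (σ k)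
      · rw [min_eq_right h]; exact h0
    have e1 := hχh (max (x (σ k)) 0) hmaxI (Aup σ (k:ℕ))
    have e2 := hχh (max (x (σ k)) 0) hmaxI (Aup σ ((k:ℕ)+1))
    have e3 := hχh (min (x (σ k)) 0) hminI (Adown σ ((k:ℕ)+1))
    have e4 := hχh (min (x (σ k)) 0) hminI (Adown σ (k:ℕ))
    have E1 : f (fun i => max (x (σ k)) 0 * ind (Aup σ (k:ℕ)) i)
        = f (fun _ => 0) + χ (max (x (σ k)) 0) * (f (ind (Aup σ (k:ℕ))) - f (fun _ => 0)) := by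
      linarith [e1]
    have E2 : f (fun i => max (x (σ k)) 0 * ind (Aup σ ((k:ℕ)+1)) i)
        = f (fun _ => 0) + χ (max (x (σ k)) 0) * (f (ind (Aup σ ((k:ℕ)+1))) - f (fun _ => 0)) := by
      linarith [e2]
    have E3 : f (fun i => min (x (σ k)) 0 * ind (Adown σ ((k:ℕ)+1)) i)
        = f (fun _ => 0) + χ (min (x (σ k)) 0) * (f (ind (Adown σ ((k:ℕ)+1))) - f (fun _ => 0)) := by
      linarith [e3]
    have E4 : f (fun i => min (x (σ k)) 0 * ind (Adown σ (k:ℕ)) i)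
        = f (fun _ => 0) + χ (min (x (σ k)) 0) * (f (ind (Adown σ (k:ℕ))) - f (fun _ => 0)) := by
      linarith [e4]
    rw [E1, E2, E3, E4]
    ring
  by_cases hdeg : ∀ A : Finset (Fin n), f (ind A) - f (fun _ => 0) = 0
  · exfalso
    apply nonconst f hnc
    intro x hx
    obtain ⟨σ, hσ⟩ := exists_sort x
    rw [masterχ x hx σ hσ]
    have hz : ∀ k : Fin n,
        (χ (max (x (σ k)) 0) * ((f (ind (Aup σ (k:ℕ))) - f (fun _ => 0))
            - (f (ind (Aup σ ((k:ℕ)+1))) - f (fun _ => 0)))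
         + χ (min (x (σ k)) 0) * ((f (ind (Adown σ ((k:ℕ)+1))) - f (fun _ => 0))
            - (f (ind (Adown σ (k:ℕ))) - f (fun _ => 0)))) = 0 := by
      intro k
      rw [hdeg (Aup σ (k:ℕ)), hdeg (Aup σ ((k:ℕ)+1)), hdeg (Adown σ ((k:ℕ)+1)),
        hdeg (Adown σ (k:ℕ))]
      ring
    rw [Finset.sum_congr rfl (fun k _ => hz k), Finset.sum_const_zero, add_zero]
  · push_neg at hdeg
    obtain ⟨A1, hA1⟩ := hdeg
    have hχ1 : χ 1 = 1 := by
      have h := hχh 1 h1 A1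
      rw [show (fun i => (1:ℝ) * ind A1 i) = ind A1 from funext fun i => one_mul _] at h
      have h2 : (χ 1 - 1) * (f (ind A1) - f (fun _ => 0)) = 0 := by linarith
      rcases mul_eq_zero.mp h2 with h3 | h3
      · linarith
      · exact absurd h3 hA1
    refine ⟨χ, hχm, hχo, hχ1, ?_⟩
    intro x hx
    obtain ⟨σ, hσx⟩ := exists_sort x
    have hσχ : inRσ σ (fun i => χ (x i)) := fun i j hij => hχm (hx _) (hx _) (hσx i j hij)
    rw [masterχ x hx σ hσx, SLov_sorted (fun A => f (ind A)) σ _ hσχ]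
    rw [show (ind (∅ : Finset (Fin n))) = (fun _ : Fin n => (0:ℝ)) from ind_empty]
    congr 1
    apply Finset.sum_congr rfl
    intro k _
    have hxI := hx (σ k)
    have hmax : χ (max (x (σ k)) 0) = max (χ (x (σ k))) 0 := by
      rcases le_total (x (σ k)) 0 with h | h
      · have hle : χ (x (σ k)) ≤ 0 := by
          have := hχm hxI h0 h; rwa [hχ0] at this
        rw [max_eq_right h, hχ0, max_eq_right hle]
      · have hle : 0 ≤ χ (x (σ k)) := by
          have := hχm h0 hxI h; rwa [hχ0] at this
        rw [max_eq_left h, max_eq_left hle]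
    have hmin : χ (min (x (σ k)) 0) = -(max (-(χ (x (σ k)))) 0) := by
      rcases le_total (x (σ k)) 0 with h | h
      · have hle : χ (x (σ k)) ≤ 0 := by
          have := hχm hxI h0 h; rwa [hχ0] at this
        rw [min_eq_left h, max_eq_left (by linarith)]; ring
      · have hle : 0 ≤ χ (x (σ k)) := by
          have := hχm h0 hxI h; rwa [hχ0] at this
        rw [min_eq_right h, hχ0, max_eq_right (by linarith)]; ring
    rw [hmax, hmin]
    ring

end Stmt18Aux


/-- For `I` centered at `0` with `[−1,1] ⊆ I` and `f : Iⁿ → ℝ` whose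
restriction to `(I ∩ ℝ₊)ⁿ` or `(I ∩ ℝ₋)ⁿ` is nonconstant, TFAE:
(i) `f` is a symmetric quasi-Lovász extension and `f_0(1_A) ≠ 0` for some `A`;
(ii) `f` is comonotonically modular and `f_0` is oddly homogeneous;
(iii) there is a nondecreasing odd `φ_f : I → ℝ` with `φ_f(1) = 1` and
`f = Ľ_{f|_{{0,1}ⁿ}} ∘ φ_f`. -/
theorem stmt18 {n : ℕ} (I : Set ℝ) (hI : I.OrdConnected)
    (hsym : ∀ x ∈ I, -x ∈ I) (hI1 : Set.Icc (-1 : ℝ) 1 ⊆ I)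
    (f : (Fin n → ℝ) → ℝ)
    (hnc : (∃ x y : Fin n → ℝ, (∀ i, x i ∈ I ∩ Set.Ici (0 : ℝ)) ∧
              (∀ i, y i ∈ I ∩ Set.Ici (0 : ℝ)) ∧ f x ≠ f y) ∨
           (∃ x y : Fin n → ℝ, (∀ i, x i ∈ I ∩ Set.Iic (0 : ℝ)) ∧
              (∀ i, y i ∈ I ∩ Set.Iic (0 : ℝ)) ∧ f x ≠ f y)) :
    ((IsSymQLE I f ∧ ∃ A : Finset (Fin n), f (ind A) - f (fun _ => 0) ≠ 0) ↔
       (ComonModular I f ∧ OddlyHom I (fun y => f y - f (fun _ => 0)))) ∧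
    ((ComonModular I f ∧ OddlyHom I (fun y => f y - f (fun _ => 0))) ↔
       ∃ φf : ℝ → ℝ, MonotoneOn φf I ∧ (∀ x ∈ I, φf (-x) = -(φf x)) ∧ φf 1 = 1 ∧
         ∀ x : Fin n → ℝ, (∀ i, x i ∈ I) →
           f x = SLov (fun A => f (ind A)) (fun i => φf (x i))) := by
  have h0 : (0:ℝ) ∈ I := hI1 ⟨by norm_num, by norm_num⟩
  have h1 : (1:ℝ) ∈ I := hI1 ⟨by norm_num, le_rfl⟩
  constructor
  · constructor
    · rintro ⟨hQ, hA⟩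
      exact Stmt18Aux.imp32 f h0 h1 (Stmt18Aux.imp13 f h0 h1 hQ hA)
    · rintro ⟨hm, hoh⟩
      exact Stmt18Aux.imp31 f hnc (Stmt18Aux.imp23 f h0 h1 hnc hm hoh)
  · constructor
    · rintro ⟨hm, hoh⟩
      exact Stmt18Aux.imp23 f h0 h1 hnc hm hoh
    · intro hP3
      exact Stmt18Aux.imp32 f h0 h1 hP3
end
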